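/- arXiv:1810.02565 — 5 statements merged into one kernel-verified Lean document; each statement's English description precedes it below -/
import Mathlib

section
/- Under the SGD setup, if h ≤ 1/L then for every k ≥ 0 the ψ-weighted average of expected squared gradient norms satisfies (1/φ_{k+1}) Σ_{i=0}^k ψ_i · E[‖∇f(x_i)‖²] ≤ 2 (f(x₀) − f(x⋆)) / (h φ_{k+1}) + (h d L σ⋆² / φ_{k+1}) · Σ_{i=0}^k ψ_i² / b_i. -/
set_option maxHeartbeats 1000000
open MeasureTheory Filter
open scoped RealInnerProductSpace

private lemma integrable_inner_of_memL2 {Ω : Type*} {m0 : MeasurableSpace Ω} {μ : Measure Ω}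
    {E : Type*} [NormedAddCommGroup E] [InnerProductSpace ℝ E]
    {F G : Ω → E} (hF : MemLp F 2 μ) (hG : MemLp G 2 μ) :
    Integrable (fun ω => ⟪F ω, G ω⟫) μ := by
  have h := MeasureTheory.L2.integrable_inner (𝕜 := ℝ) (hF.toLp F) (hG.toLp G)
  refine h.congr ?_
  filter_upwards [hF.coeFn_toLp, hG.coeFn_toLp] with ω h1 h2
  rw [h1, h2]
private lemma descent_lemma {E : Type*} [NormedAddCommGroup E] [InnerProductSpace ℝ E]
    [CompleteSpace E] (f : E → ℝ) (hf : ContDiff ℝ 1 f) (L : ℝ)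
    (hL : ∀ x y : E, ‖gradient f x - gradient f y‖ ≤ L * ‖x - y‖) (x y : E) :
    f y ≤ f x + ⟪gradient f x, y - x⟫ + L / 2 * ‖y - x‖ ^ 2 := by
  have hgrad_apply : ∀ z v : E, ⟪gradient f z, v⟫ = fderiv ℝ f z v := by
    intro z v
    rw [show gradient f z = (InnerProductSpace.toDual ℝ E).symm (fderiv ℝ f z) from rfl,
      ← InnerProductSpace.toDual_apply_apply, LinearIsometryEquiv.apply_symm_apply]
  set v := y - x with hv
  have hgradcont : Continuous (gradient f) := by
    exact (InnerProductSpace.toDual ℝ E).symm.continuous.comp (hf.continuous_fderiv one_ne_zero)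
  have hcurve : ∀ t : ℝ, HasDerivAt (fun t : ℝ => x + t • v) v t := by
    intro t
    simpa using ((hasDerivAt_id t).smul_const v).const_add x
  have hg : ∀ t : ℝ, HasDerivAt (fun t : ℝ => f (x + t • v))
      ⟪gradient f (x + t • v), v⟫ t := by
    intro t
    rw [hgrad_apply]
    exact ((hf.differentiable one_ne_zero _).hasFDerivAt).comp_hasDerivAt t (hcurve t)
  have hcont : Continuous fun t : ℝ => ⟪gradient f (x + t • v), v⟫ := by
    exact (hgradcont.comp (by continuity)).inner continuous_const
  have hkey : f y - f x = ∫ t in (0:ℝ)..1, ⟪gradient f (x + t • v), v⟫ := by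
    have h1 := intervalIntegral.integral_eq_sub_of_hasDerivAt (f := fun t : ℝ => f (x + t • v))
      (fun t _ => hg t) (hcont.intervalIntegrable 0 1)
    simpa [hv] using h1.symm
  have hc2 : Continuous fun t : ℝ => L * t * ‖v‖ ^ 2 := by continuity
  have hbound : ∫ t in (0:ℝ)..1, ⟪gradient f (x + t • v), v⟫ ≤
      ∫ t in (0:ℝ)..1, (⟪gradient f x, v⟫ + L * t * ‖v‖ ^ 2) := by
    apply intervalIntegral.integral_mono_on (by norm_num) (hcont.intervalIntegrable 0 1)
      ((continuous_const.add hc2).intervalIntegrable 0 1)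
    intro t ht
    have h1 : ⟪gradient f (x + t • v) - gradient f x, v⟫ ≤ L * t * ‖v‖ ^ 2 := by
      calc ⟪gradient f (x + t • v) - gradient f x, v⟫ ≤
          ‖gradient f (x + t • v) - gradient f x‖ * ‖v‖ := real_inner_le_norm _ _
        _ ≤ (L * ‖(x + t • v) - x‖) * ‖v‖ :=
            mul_le_mul_of_nonneg_right (hL _ _) (norm_nonneg _)
        _ = L * t * ‖v‖ ^ 2 := by
            rw [add_sub_cancel_left, norm_smul, Real.norm_eq_abs, abs_of_nonneg ht.1]
            ring
    have h2 := inner_sub_left (𝕜 := ℝ) (gradient f (x + t • v)) (gradient f x) v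
    rw [h2] at h1
    show ⟪gradient f (x + t • v), v⟫ ≤ ⟪gradient f x, v⟫ + L * t * ‖v‖ ^ 2
    linarith
  have hrhs : ∫ t in (0:ℝ)..1, (⟪gradient f x, v⟫ + L * t * ‖v‖ ^ 2) =
      ⟪gradient f x, v⟫ + L / 2 * ‖v‖ ^ 2 := by
    rw [intervalIntegral.integral_add (intervalIntegrable_const) (hc2.intervalIntegrable 0 1)]
    simp only [intervalIntegral.integral_const, smul_eq_mul]
    have : ∫ t in (0:ℝ)..1, L * t * ‖v‖ ^ 2 = L * ‖v‖ ^ 2 / 2 := by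
      have : (fun t : ℝ => L * t * ‖v‖ ^ 2) = fun t : ℝ => (L * ‖v‖ ^ 2) * t := by
        funext t; ring
      rw [this, intervalIntegral.integral_const_mul, integral_id]
      ring
    rw [this]; ring
  have := hkey ▸ le_trans (hkey.le.trans hbound) hrhs.le
  linarith [hbound, hrhs, hkey]
private lemma integral_inner_eq_integral_norm_sq {Ω : Type*} {m : MeasurableSpace Ω}
    {m0 : MeasurableSpace Ω} {μ : Measure Ω} [IsProbabilityMeasure μ] (hm : m ≤ m0) {d : ℕ}
    {F G : Ω → EuclideanSpace ℝ (Fin d)}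
    (hFm : StronglyMeasurable[m] F)
    (hF : MemLp F 2 μ) (hG : MemLp G 2 μ)
    (hcond : μ[G|m] =ᵐ[μ] F) :
    ∫ ω, ⟪F ω, G ω⟫ ∂μ = ∫ ω, ‖F ω‖ ^ 2 ∂μ := by
  have hrinner : ∀ a b : ℝ, ⟪a, b⟫ = a * b := fun a b => by
    simp [RCLike.inner_apply]; ring
  have hGint : Integrable G μ := hG.integrable one_le_two
  have hFint : Integrable F μ := hF.integrable one_le_two
  -- coordinate memℒp
  have hFj : ∀ j : Fin d, MemLp (fun ω => F ω j) 2 μ := fun j => by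
    have := (EuclideanSpace.proj (𝕜 := ℝ) j).comp_memLp' hF
    exact this
  have hGj : ∀ j : Fin d, MemLp (fun ω => G ω j) 2 μ := fun j => by
    have := (EuclideanSpace.proj (𝕜 := ℝ) j).comp_memLp' hG
    exact this
  -- coordinate conditional expectation
  have hcondj : ∀ j : Fin d, (fun ω => F ω j) =ᵐ[μ] μ[fun ω => G ω j|m] := by
    intro j
    refine ae_eq_condExp_of_forall_setIntegral_eq hm ((hGj j).integrable one_le_two)
      (fun s _ _ => ((hFj j).integrable one_le_two).integrableOn) (fun s hs _ => ?_) ?_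
    · have h1 : ∫ ω in s, G ω ∂μ = ∫ ω in s, F ω ∂μ := by
        rw [← setIntegral_condExp hm hGint hs]
        exact setIntegral_congr_ae (hm s hs) (hcond.mono fun ω hω _ => hω.symm) |>.symm
      have h2 := (EuclideanSpace.proj (𝕜 := ℝ) j).integral_comp_comm
        (hGint.integrableOn : IntegrableOn _ s μ)
      have h3 := (EuclideanSpace.proj (𝕜 := ℝ) j).integral_comp_comm
        (hFint.integrableOn : IntegrableOn _ s μ)
      calc ∫ ω in s, F ω j ∂μ = EuclideanSpace.proj (𝕜 := ℝ) j (∫ ω in s, F ω ∂μ) := h3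
        _ = EuclideanSpace.proj (𝕜 := ℝ) j (∫ ω in s, G ω ∂μ) := by rw [h1]
        _ = ∫ ω in s, G ω j ∂μ := h2.symm
    · exact StronglyMeasurable.aestronglyMeasurable
        ((EuclideanSpace.proj (𝕜 := ℝ) j).continuous.comp_stronglyMeasurable hFm)
  -- per-coordinate pull-out
  have hmul : ∀ j : Fin d, ∫ ω, F ω j * G ω j ∂μ = ∫ ω, F ω j * F ω j ∂μ := by
    intro j
    have hFjm : StronglyMeasurable[m] (fun ω => F ω j) :=
      (EuclideanSpace.proj (𝕜 := ℝ) j).continuous.comp_stronglyMeasurable hFm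
    have hprod : Integrable (fun ω => F ω j * G ω j) μ := by
      have := integrable_inner_of_memL2 (hFj j) (hGj j)
      simpa [hrinner, mul_comm] using this
    have hpull := condExp_mul_of_stronglyMeasurable_left hFjm
      (by exact hprod) ((hGj j).integrable one_le_two)
    calc ∫ ω, F ω j * G ω j ∂μ
        = ∫ ω, (μ[(fun ω => F ω j) * (fun ω => G ω j)|m]) ω ∂μ :=
          (integral_condExp hm).symm
      _ = ∫ ω, ((fun ω => F ω j) * μ[fun ω => G ω j|m]) ω ∂μ := integral_congr_ae hpull
      _ = ∫ ω, F ω j * F ω j ∂μ := by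
          refine integral_congr_ae ?_
          filter_upwards [hcondj j] with ω hω
          simp only [Pi.mul_apply]
          rw [← hω]
  -- summation
  have hsum1 : ∀ ω, ⟪F ω, G ω⟫ = ∑ j : Fin d, F ω j * G ω j := fun ω => by
    rw [PiLp.inner_apply]; simp [hrinner, mul_comm]
  have hsum2 : ∀ ω : Ω, ‖F ω‖ ^ 2 = ∑ j : Fin d, F ω j * F ω j := fun ω => by
    rw [← real_inner_self_eq_norm_sq, PiLp.inner_apply]; simp [hrinner, sq]
  have hintFG : ∀ j : Fin d, Integrable (fun ω => F ω j * G ω j) μ := fun j => by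
    simpa [hrinner, mul_comm] using integrable_inner_of_memL2 (hFj j) (hGj j)
  have hintFF : ∀ j : Fin d, Integrable (fun ω => F ω j * F ω j) μ := fun j => by
    simpa [hrinner, sq] using integrable_inner_of_memL2 (hFj j) (hFj j)
  calc ∫ ω, ⟪F ω, G ω⟫ ∂μ = ∫ ω, ∑ j : Fin d, F ω j * G ω j ∂μ := by simp_rw [hsum1]
    _ = ∑ j : Fin d, ∫ ω, F ω j * G ω j ∂μ :=
        integral_finset_sum _ (fun j _ => hintFG j)
    _ = ∑ j : Fin d, ∫ ω, F ω j * F ω j ∂μ := by simp_rw [hmul]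
    _ = ∫ ω, ∑ j : Fin d, F ω j * F ω j ∂μ :=
        (integral_finset_sum _ (fun j _ => hintFF j)).symm
    _ = ∫ ω, ‖F ω‖ ^ 2 ∂μ := by simp_rw [hsum2]
/-- **Randomized-iterate guarantee for mini-batch SGD on smooth functions.**
If `h ≤ 1/L` then for every `k`, with `φ_{k+1} = Σ_{i=0}^k ψ_i`,
`(1/φ_{k+1}) Σ_{i=0}^k ψ_i E[‖∇f(x_i)‖²]
  ≤ 2(f(x₀) − f(x⋆))/(h φ_{k+1}) + (h d L σ⋆²/φ_{k+1}) Σ_{i=0}^k ψ_i²/b_i`. -/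
theorem sgd_weighted_avg_sq_grad_norm_bound
    {Ω : Type*} {m0 : MeasurableSpace Ω} {μ : Measure Ω} [IsProbabilityMeasure μ]
    {d : ℕ} (f : EuclideanSpace ℝ (Fin d) → ℝ) (L : ℝ)
    (hf : ContDiff ℝ 1 f)
    (hL : ∀ x y : EuclideanSpace ℝ (Fin d), ‖gradient f x - gradient f y‖ ≤ L * ‖x - y‖)
    (xstar : EuclideanSpace ℝ (Fin d)) (hmin : ∀ x, f xstar ≤ f x)
    (ℱ : Filtration ℕ m0)
    (x G : ℕ → Ω → EuclideanSpace ℝ (Fin d))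
    (x0 : EuclideanSpace ℝ (Fin d)) (hx0 : x 0 = fun _ => x0)
    (hx_meas : ∀ k, Measurable[ℱ k] (x k))
    (σsq : ℝ) (hσsq : 0 ≤ σsq)
    (b : ℕ → ℝ) (hb : ∀ k, 1 ≤ b k)
    (h : ℝ) (hh : 0 < h)
    (ψ : ℕ → ℝ) (hψpos : ∀ k, 0 < ψ k) (hψle : ∀ k, ψ k ≤ 1)
    (hψ0 : ψ 0 = 1) (hψmono : ∀ k, ψ (k + 1) ≤ ψ k)
    (η : ℕ → ℝ) (hη : ∀ k, η k = h * ψ k)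
    (hupdate : ∀ k ω, x (k + 1) ω = x k ω - η k • G k ω)
    (hG2 : ∀ k, MemLp (G k) 2 μ)
    (hGmean : ∀ k, μ[G k | ℱ k] =ᵐ[μ] fun ω => gradient f (x k ω))
    (hGvar : ∀ k, ∀ᵐ ω ∂μ,
      (μ[fun ω' => ‖G k ω' - gradient f (x k ω')‖ ^ 2 | ℱ k]) ω ≤ d * σsq / b k)
    (hhL : h ≤ 1 / L)
    (k : ℕ) :
    (1 / ∑ i ∈ Finset.range (k + 1), ψ i) *
        ∑ i ∈ Finset.range (k + 1), ψ i * ∫ ω, ‖gradient f (x i ω)‖ ^ 2 ∂μ ≤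
      2 * (f x0 - f xstar) / (h * ∑ i ∈ Finset.range (k + 1), ψ i)
        + (h * d * L * σsq / ∑ i ∈ Finset.range (k + 1), ψ i) *
            ∑ i ∈ Finset.range (k + 1), ψ i ^ 2 / b i := by
  -- basic positivity
  have hL0 : 0 < L := by
    by_contra hc
    push_neg at hc
    have : (1:ℝ)/L ≤ 0 := one_div_nonpos.mpr hc
    linarith
  have hLh : L * h ≤ 1 := by
    rw [mul_comm, ← le_div_iff₀ hL0]
    exact hhL
  -- Lipschitz gradient facts
  have gradlip : LipschitzWith (Real.toNNReal L) (gradient f) := by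
    apply LipschitzWith.of_dist_le_mul
    intro a c
    rw [dist_eq_norm, dist_eq_norm, Real.coe_toNNReal L hL0.le]
    exact hL a c
  have gradcont : Continuous (gradient f) := gradlip.continuous
  have hxmeas0 : ∀ i, Measurable (x i) := fun i => (hx_meas i).mono (ℱ.le i) le_rfl
  -- Memℒp facts
  have hxm : ∀ i, MemLp (x i) 2 μ := by
    intro i
    induction i with
    | zero => rw [hx0]; exact memLp_const x0
    | succ n ih =>
      have hxe : x (n+1) = fun ω => x n ω - η n • G n ω := funext (hupdate n)
      rw [hxe]
      exact ih.sub ((hG2 n).const_smul (η n))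
  have hgradm : ∀ i, MemLp (fun ω => gradient f (x i ω)) 2 μ := by
    intro i
    have lip0 : LipschitzWith (Real.toNNReal L)
        (fun z : EuclideanSpace ℝ (Fin d) => gradient f z - gradient f 0) := by
      apply LipschitzWith.of_dist_le_mul
      intro a c
      rw [dist_eq_norm, dist_eq_norm, sub_sub_sub_cancel_right, Real.coe_toNNReal L hL0.le]
      exact hL a c
    have h1 : MemLp (fun ω => gradient f (x i ω) - gradient f 0) 2 μ :=
      lip0.comp_memLp (by simp) (hxm i)
    have h2 := h1.add (memLp_const (μ := μ) (gradient f 0))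
    have he : (fun ω => gradient f (x i ω) - gradient f 0) + (fun _ => gradient f 0)
        = fun ω => gradient f (x i ω) := by
      funext ω; simp
    exact he ▸ h2
  -- gradient vanishes at the minimizer
  have hgradstar : gradient f xstar = 0 := by
    have hloc : IsLocalMin f xstar := Filter.Eventually.of_forall hmin
    have hfd : fderiv ℝ f xstar = 0 := hloc.fderiv_eq_zero
    show (InnerProductSpace.toDual ℝ _).symm (fderiv ℝ f xstar) = 0
    rw [hfd]
    simp
  have hfub : ∀ z, f z ≤ f xstar + L/2 * ‖z - xstar‖ ^ 2 := by
    intro z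
    have hd := descent_lemma f hf L hL xstar z
    rw [hgradstar] at hd
    simpa using hd
  -- integrability of f ∘ x i
  have hfint : ∀ i, Integrable (fun ω => f (x i ω)) μ := by
    intro i
    have hmeas : AEStronglyMeasurable (fun ω => f (x i ω)) μ :=
      (hf.continuous.measurable.comp (hxmeas0 i)).aestronglyMeasurable
    have hsqint : Integrable (fun ω => ‖x i ω - xstar‖ ^ 2) μ := by
      have hm2 : MemLp (fun ω => x i ω - xstar) 2 μ := (hxm i).sub (memLp_const _)
      exact (integrable_inner_of_memL2 hm2 hm2).congr
        (Filter.Eventually.of_forall fun ω => real_inner_self_eq_norm_sq _)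
    have hdom : Integrable (fun ω => |f xstar| + L/2 * ‖x i ω - xstar‖ ^ 2) μ :=
      (integrable_const _).add (hsqint.const_mul _)
    refine hdom.mono' hmeas ?_
    filter_upwards with ω
    rw [Real.norm_eq_abs, abs_le]
    constructor
    · nlinarith [hmin (x i ω), neg_abs_le (f xstar), sq_nonneg ‖x i ω - xstar‖]
    · nlinarith [hfub (x i ω), le_abs_self (f xstar), sq_nonneg ‖x i ω - xstar‖]
  -- nonnegativity of the squared gradient integrals
  have hAnonneg : ∀ i, 0 ≤ ∫ ω, ‖gradient f (x i ω)‖ ^ 2 ∂μ := fun i =>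
    integral_nonneg fun ω => sq_nonneg _
  -- the one-step inequality
  have hstep : ∀ i, h * ψ i / 2 * ∫ ω, ‖gradient f (x i ω)‖ ^ 2 ∂μ ≤
      (∫ ω, f (x i ω) ∂μ) - (∫ ω, f (x (i+1) ω) ∂μ)
        + L * h^2 * ψ i^2 / 2 * (d * σsq / b i) := by
    intro i
    have hFim : StronglyMeasurable[ℱ i] (fun ω => gradient f (x i ω)) :=
      (gradcont.measurable.comp (hx_meas i)).stronglyMeasurable
    have hFGint : Integrable (fun ω => ⟪gradient f (x i ω), G i ω⟫) μ :=
      integrable_inner_of_memL2 (hgradm i) (hG2 i)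
    have hGsqint : Integrable (fun ω => ‖G i ω‖ ^ 2) μ :=
      (integrable_inner_of_memL2 (hG2 i) (hG2 i)).congr
        (Filter.Eventually.of_forall fun ω => real_inner_self_eq_norm_sq _)
    have hFsqint : Integrable (fun ω => ‖gradient f (x i ω)‖ ^ 2) μ :=
      (integrable_inner_of_memL2 (hgradm i) (hgradm i)).congr
        (Filter.Eventually.of_forall fun ω => real_inner_self_eq_norm_sq _)
    have hΔm : MemLp (fun ω => G i ω - gradient f (x i ω)) 2 μ := (hG2 i).sub (hgradm i)
    have hΔint : Integrable (fun ω => ‖G i ω - gradient f (x i ω)‖ ^ 2) μ :=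
      (integrable_inner_of_memL2 hΔm hΔm).congr
        (Filter.Eventually.of_forall fun ω => real_inner_self_eq_norm_sq _)
    have key : ∫ ω, ⟪gradient f (x i ω), G i ω⟫ ∂μ = ∫ ω, ‖gradient f (x i ω)‖ ^ 2 ∂μ :=
      integral_inner_eq_integral_norm_sq (ℱ.le i) hFim (hgradm i) (hG2 i) (hGmean i)
    have hΔ : ∫ ω, ‖G i ω - gradient f (x i ω)‖ ^ 2 ∂μ ≤ d * σsq / b i := by
      calc ∫ ω, ‖G i ω - gradient f (x i ω)‖ ^ 2 ∂μ
          = ∫ ω, (μ[fun ω' => ‖G i ω' - gradient f (x i ω')‖ ^ 2|ℱ i]) ω ∂μ :=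
            (integral_condExp (ℱ.le i)).symm
        _ ≤ ∫ _ω, (d * σsq / b i : ℝ) ∂μ :=
            integral_mono_ae integrable_condExp (integrable_const _) (hGvar i)
        _ = d * σsq / b i := by simp
    have hGsq : ∫ ω, ‖G i ω‖ ^ 2 ∂μ ≤
        (∫ ω, ‖gradient f (x i ω)‖ ^ 2 ∂μ) + d * σsq / b i := by
      have hexp : (fun ω => ‖G i ω‖ ^ 2) = fun ω =>
          ‖G i ω - gradient f (x i ω)‖ ^ 2 + 2 * ⟪gradient f (x i ω), G i ω⟫
            - ‖gradient f (x i ω)‖ ^ 2 := by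
        funext ω
        have h1 := norm_sub_sq_real (G i ω) (gradient f (x i ω))
        have h2 := real_inner_comm (G i ω) (gradient f (x i ω))
        linarith
      have h2int : Integrable (fun ω => 2 * ⟪gradient f (x i ω), G i ω⟫) μ :=
        hFGint.const_mul 2
      have hsum_int : Integrable (fun ω => ‖G i ω - gradient f (x i ω)‖ ^ 2
          + 2 * ⟪gradient f (x i ω), G i ω⟫) μ := hΔint.add h2int
      rw [hexp, integral_sub hsum_int hFsqint, integral_add hΔint h2int,
        integral_const_mul, key]
      linarith
    -- pointwise descent inequality
    have hpt : ∀ ω, f (x (i+1) ω) ≤ f (x i ω) +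
        (-(η i) * ⟪gradient f (x i ω), G i ω⟫ + L/2 * ((η i)^2 * ‖G i ω‖ ^ 2)) := by
      intro ω
      have hd := descent_lemma f hf L hL (x i ω) (x (i+1) ω)
      rw [hupdate i ω] at hd ⊢
      rw [sub_sub_cancel_left, inner_neg_right, real_inner_smul_right, norm_neg, norm_smul,
        mul_pow, Real.norm_eq_abs, sq_abs] at hd
      linarith
    have hterm2 : Integrable (fun ω => -(η i) * ⟪gradient f (x i ω), G i ω⟫) μ :=
      hFGint.const_mul (-(η i))
    have hterm3 : Integrable (fun ω => L/2 * ((η i)^2 * ‖G i ω‖ ^ 2)) μ :=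
      (hGsqint.const_mul ((η i)^2)).const_mul (L/2)
    have hterm23 : Integrable (fun ω => -(η i) * ⟪gradient f (x i ω), G i ω⟫
        + L/2 * ((η i)^2 * ‖G i ω‖ ^ 2)) μ := hterm2.add hterm3
    have hrint : Integrable (fun ω => f (x i ω) +
        (-(η i) * ⟪gradient f (x i ω), G i ω⟫ + L/2 * ((η i)^2 * ‖G i ω‖ ^ 2))) μ :=
      (hfint i).add hterm23
    have hint1 := integral_mono (hfint (i+1)) hrint hpt
    rw [integral_add (hfint i) hterm23, integral_add hterm2 hterm3,
      integral_const_mul, integral_const_mul, integral_const_mul, key] at hint1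
    -- combine
    have hcoef : 0 ≤ L/2 * (η i)^2 := by positivity
    have hGsq' : L/2 * ((η i)^2 * ∫ ω, ‖G i ω‖ ^ 2 ∂μ) ≤
        L/2 * ((η i)^2 * ((∫ ω, ‖gradient f (x i ω)‖ ^ 2 ∂μ) + d * σsq / b i)) := by
      apply mul_le_mul_of_nonneg_left _ (by positivity)
      exact mul_le_mul_of_nonneg_left hGsq (sq_nonneg _)
    have hηi : η i = h * ψ i := hη i
    have hψi := hψpos i
    have hψi1 := hψle i
    have hLψ : L * (h * ψ i) ≤ 1 := by
      have h1 : L * (h * ψ i) ≤ 1 * ψ i := by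
        rw [← mul_assoc]
        exact mul_le_mul_of_nonneg_right hLh hψi.le
      linarith
    have hA := hAnonneg i
    rw [hηi] at hint1 hGsq'
    nlinarith [mul_nonneg (mul_nonneg (mul_nonneg hh.le hψi.le) hA)
      (sub_nonneg.mpr hLψ), hσsq, hb i]
  -- sum the one step inequalities
  have hsum := Finset.sum_le_sum (fun i (_ : i ∈ Finset.range (k+1)) => hstep i)
  rw [Finset.sum_add_distrib, Finset.sum_range_sub' (fun i => ∫ ω, f (x i ω) ∂μ)] at hsum
  have hF0 : ∫ ω, f (x 0 ω) ∂μ = f x0 := by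
    rw [hx0]
    simp
  have hFk : f xstar ≤ ∫ ω, f (x (k+1) ω) ∂μ := by
    calc f xstar = ∫ _ω, f xstar ∂μ := by simp
      _ ≤ ∫ ω, f (x (k+1) ω) ∂μ :=
          integral_mono (integrable_const _) (hfint (k+1)) (fun ω => hmin _)
  rw [hF0] at hsum
  have hsum2 : (h/2) * ∑ i ∈ Finset.range (k+1), ψ i * ∫ ω, ‖gradient f (x i ω)‖ ^ 2 ∂μ ≤
      (f x0 - f xstar) + (L * h^2 * (d * σsq) / 2) *
        ∑ i ∈ Finset.range (k+1), ψ i ^ 2 / b i := by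
    have e1 : (h/2) * ∑ i ∈ Finset.range (k+1), ψ i * ∫ ω, ‖gradient f (x i ω)‖ ^ 2 ∂μ
        = ∑ i ∈ Finset.range (k+1), h * ψ i / 2 * ∫ ω, ‖gradient f (x i ω)‖ ^ 2 ∂μ := by
      rw [Finset.mul_sum]
      exact Finset.sum_congr rfl fun i _ => by ring
    have e2 : (L * h^2 * (d * σsq) / 2) * ∑ i ∈ Finset.range (k+1), ψ i ^ 2 / b i
        = ∑ i ∈ Finset.range (k+1), L * h^2 * ψ i^2 / 2 * (d * σsq / b i) := by
      rw [Finset.mul_sum]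
      exact Finset.sum_congr rfl fun i _ => by ring
    rw [e1, e2]
    linarith
  -- final algebra
  have hφ : 0 < ∑ i ∈ Finset.range (k+1), ψ i :=
    Finset.sum_pos (fun i _ => hψpos i) ⟨0, Finset.mem_range.mpr k.succ_pos⟩
  set S := ∑ i ∈ Finset.range (k+1), ψ i * ∫ ω, ‖gradient f (x i ω)‖ ^ 2 ∂μ with hS
  set T := ∑ i ∈ Finset.range (k+1), ψ i ^ 2 / b i with hT
  set φ := ∑ i ∈ Finset.range (k+1), ψ i with hφdef
  have key2 : S ≤ 2 * (f x0 - f xstar) / h + (h * d * L * σsq) * T := by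
    have h0 : S = (2/h) * ((h/2) * S) := by field_simp
    rw [h0]
    calc (2/h) * ((h/2) * S)
        ≤ (2/h) * ((f x0 - f xstar) + (L * h^2 * (d * σsq) / 2) * T) :=
          mul_le_mul_of_nonneg_left hsum2 (by positivity)
      _ = 2 * (f x0 - f xstar) / h + (h * d * L * σsq) * T := by
          field_simp
  calc (1/φ) * S = S / φ := by ring
    _ ≤ (2 * (f x0 - f xstar) / h + (h * d * L * σsq) * T) / φ :=
        (div_le_div_iff_of_pos_right hφ).mpr key2
    _ = 2 * (f x0 - f xstar) / (h * φ) + (h * d * L * σsq / φ) * T := by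
        field_simp
end

section
/- Under the SGD setup with f τ-weakly-quasi-convex, if 0 < h ≤ τ/(2L) then for every k ≥ 0 the ψ-weighted average of expected suboptimalities satisfies (1/φ_{k+1}) Σ_{i=0}^k ψ_i · E[f(x_i) − f(x⋆)] ≤ ‖x₀ − x⋆‖² / (τ h φ_{k+1}) + (d h σ⋆² / (τ φ_{k+1})) · Σ_{i=0}^k ψ_i² / b_i. -/
open MeasureTheory Filter
open scoped RealInnerProductSpace

section Aux

lemma sgd_expand_sq {E : Type*} [NormedAddCommGroup E] [InnerProductSpace ℝ E]
    (a g dd : E) (c : ℝ) :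
    ‖a - c • (g + dd)‖ ^ 2 = ‖a‖ ^ 2 - 2 * c * ⟪a, g⟫ - 2 * c * ⟪a, dd⟫
      + c ^ 2 * ‖g‖ ^ 2 + 2 * c ^ 2 * ⟪g, dd⟫ + c ^ 2 * ‖dd‖ ^ 2 := by
  rw [norm_sub_sq_real, real_inner_smul_right, inner_add_right, norm_smul,
    mul_pow, norm_add_sq_real]
  simp only [Real.norm_eq_abs, sq_abs]
  ring

theorem sgd_descent_aux {d : ℕ} (f : EuclideanSpace ℝ (Fin d) → ℝ) (L : ℝ) (hL0 : 0 < L)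
    (hf : ContDiff ℝ 1 f)
    (hL : ∀ x y : EuclideanSpace ℝ (Fin d), ‖gradient f x - gradient f y‖ ≤ L * ‖x - y‖)
    (x y : EuclideanSpace ℝ (Fin d)) :
    f y ≤ f x + ⟪gradient f x, y - x⟫ + L / 2 * ‖y - x‖ ^ 2 := by
  set v := y - x with hv
  have hcontg : Continuous (gradient f) := by
    have : LipschitzWith (Real.toNNReal L) (gradient f) := by
      apply LipschitzWith.of_dist_le_mul
      intro a b
      simpa [dist_eq_norm, Real.coe_toNNReal L hL0.le] using hL a b
    exact this.continuous
  have hg : ∀ t : ℝ, HasDerivAt (fun t : ℝ => f (x + t • v))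
      ⟪gradient f (x + t • v), v⟫ t := by
    intro t
    have h1 : HasGradientAt f (gradient f (x + t • v)) (x + t • v) :=
      ((hf.differentiable one_ne_zero) _).hasGradientAt
    have h2 := hasGradientAt_iff_hasFDerivAt.mp h1
    have h3 : HasDerivAt (fun t : ℝ => x + t • v) v t := by
      simpa using ((hasDerivAt_id t).smul_const v).const_add x
    have h4 := h2.comp_hasDerivAt t h3
    rw [InnerProductSpace.toDual_apply_apply] at h4
    exact h4
  have hcont : Continuous fun t : ℝ => ⟪gradient f (x + t • v), v⟫ :=
    Continuous.inner (hcontg.comp (by continuity)) continuous_const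
  have hFTC : f (x + (1:ℝ) • v) - f (x + (0:ℝ) • v)
      = ∫ t in (0:ℝ)..1, ⟪gradient f (x + t • v), v⟫ :=
    (intervalIntegral.integral_eq_sub_of_hasDerivAt (fun t _ => hg t)
      (hcont.intervalIntegrable 0 1)).symm
  have hcont2 : Continuous fun t : ℝ => ⟪gradient f x, v⟫ + L * ‖v‖ ^ 2 * t := by
    fun_prop
  have hbd : ∫ t in (0:ℝ)..1, ⟪gradient f (x + t • v), v⟫
      ≤ ∫ t in (0:ℝ)..1, (⟪gradient f x, v⟫ + L * ‖v‖ ^ 2 * t) := by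
    apply intervalIntegral.integral_mono_on zero_le_one (hcont.intervalIntegrable 0 1)
      (hcont2.intervalIntegrable 0 1)
    intro t ht
    rcases ht with ⟨ht0, ht1⟩
    have h1 : ⟪gradient f (x + t • v), v⟫ - ⟪gradient f x, v⟫
        = ⟪gradient f (x + t • v) - gradient f x, v⟫ := by
      rw [inner_sub_left]
    have h2 : ⟪gradient f (x + t • v) - gradient f x, v⟫
        ≤ ‖gradient f (x + t • v) - gradient f x‖ * ‖v‖ :=
      real_inner_le_norm _ _
    have h3 : ‖gradient f (x + t • v) - gradient f x‖ ≤ L * (t * ‖v‖) := by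
      have := hL (x + t • v) x
      simpa [norm_smul, abs_of_nonneg ht0] using this
    nlinarith [norm_nonneg v, mul_le_mul_of_nonneg_right h3 (norm_nonneg v)]
  have hval : ∫ t in (0:ℝ)..1, (⟪gradient f x, v⟫ + L * ‖v‖ ^ 2 * t)
      = ⟪gradient f x, v⟫ + L / 2 * ‖v‖ ^ 2 := by
    rw [intervalIntegral.integral_add (intervalIntegrable_const)
      ((by fun_prop : Continuous fun t : ℝ => L * ‖v‖ ^ 2 * t).intervalIntegrable 0 1),
      intervalIntegral.integral_const_mul, integral_id]
    norm_num
    ring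
  have hxy : x + v = y := by rw [hv]; abel
  have hx0 : x + (0:ℝ) • v = x := by simp
  rw [one_smul, hxy, hx0] at hFTC
  linarith [hbd.trans_eq hval, hFTC]

lemma sgd_integrable_inner_L2 {Ω : Type*} [MeasurableSpace Ω] {μ : Measure Ω}
    {E : Type*} [NormedAddCommGroup E] [InnerProductSpace ℝ E]
    {Y Z : Ω → E} (hY : MemLp Y 2 μ) (hZ : MemLp Z 2 μ) :
    Integrable (fun ω => ⟪Y ω, Z ω⟫) μ := by
  have h := MeasureTheory.L2.integrable_inner (𝕜 := ℝ) (hY.toLp Y) (hZ.toLp Z)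
  apply h.congr
  filter_upwards [hY.coeFn_toLp, hZ.coeFn_toLp] with ω h1 h2
  rw [h1, h2]

lemma sgd_condexp_proj_eq {Ω : Type*} {m m0 : MeasurableSpace Ω} {μ : Measure Ω}
    [IsFiniteMeasure μ] (hm : m ≤ m0) {d : ℕ}
    {W V : Ω → EuclideanSpace ℝ (Fin d)} (hW1 : Integrable W μ) (hV1 : Integrable V μ)
    (hVm : StronglyMeasurable[m] V) (hmean : μ[W|m] =ᵐ[μ] V) (j : Fin d) :
    μ[fun ω => W ω j | m] =ᵐ[μ] fun ω => V ω j := by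
  refine (ae_eq_condExp_of_forall_setIntegral_eq hm
    (f := fun ω => W ω j) (g := fun ω => V ω j) ?_ ?_ ?_ ?_).symm
  · have := (EuclideanSpace.proj (𝕜 := ℝ) j).integrable_comp hW1
    simpa [Function.comp] using this
  · intro s _ _
    have := (EuclideanSpace.proj (𝕜 := ℝ) j).integrable_comp hV1
    exact (by simpa [Function.comp] using this : Integrable (fun ω => V ω j) μ).integrableOn
  · intro s hs hμs
    have hWV : ∫ ω in s, V ω ∂μ = ∫ ω in s, W ω ∂μ := by
      rw [← setIntegral_condExp hm hW1 hs]
      exact (setIntegral_congr_ae (hm s hs) (hmean.mono fun ω hω _ => hω)).symm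
    have h1 := (EuclideanSpace.proj (𝕜 := ℝ) j).integral_comp_comm (hV1.restrict (s := s))
    have h2 := (EuclideanSpace.proj (𝕜 := ℝ) j).integral_comp_comm (hW1.restrict (s := s))
    show (∫ ω in s, (EuclideanSpace.proj (𝕜 := ℝ) j) (V ω) ∂μ)
        = ∫ ω in s, (EuclideanSpace.proj (𝕜 := ℝ) j) (W ω) ∂μ
    rw [h1, h2, hWV]
  · exact StronglyMeasurable.aestronglyMeasurable ((EuclideanSpace.proj (𝕜 := ℝ) j).continuous.comp_stronglyMeasurable hVm
      )

lemma sgd_cross_zero {Ω : Type*} {m m0 : MeasurableSpace Ω} {μ : Measure Ω}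
    [IsProbabilityMeasure μ] (hm : m ≤ m0) {d : ℕ}
    {W V Y : Ω → EuclideanSpace ℝ (Fin d)}
    (hW2 : MemLp W 2 μ) (hV2 : MemLp V 2 μ) (hY2 : MemLp Y 2 μ)
    (hVm : StronglyMeasurable[m] V) (hYm : StronglyMeasurable[m] Y)
    (hmean : μ[W|m] =ᵐ[μ] V) :
    ∫ ω, ⟪Y ω, W ω - V ω⟫ ∂μ = 0 := by
  have hW1 : Integrable W μ := hW2.integrable one_le_two
  have hV1 : Integrable V μ := hV2.integrable one_le_two
  have hWj2 : ∀ j, MemLp (fun ω => W ω j) 2 μ := fun j => by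
    have := (EuclideanSpace.proj (𝕜 := ℝ) j).comp_memLp' hW2
    simpa [Function.comp_def] using this
  have hVj2 : ∀ j, MemLp (fun ω => V ω j) 2 μ := fun j => by
    have := (EuclideanSpace.proj (𝕜 := ℝ) j).comp_memLp' hV2
    simpa [Function.comp_def] using this
  have hYj2 : ∀ j, MemLp (fun ω => Y ω j) 2 μ := fun j => by
    have := (EuclideanSpace.proj (𝕜 := ℝ) j).comp_memLp' hY2
    simpa [Function.comp_def] using this
  have hDj2 : ∀ j, MemLp (fun ω => W ω j - V ω j) 2 μ := fun j => (hWj2 j).sub (hVj2 j)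
  have hprod_int : ∀ j, Integrable (fun ω => Y ω j * (W ω j - V ω j)) μ := fun j => by
    have := sgd_integrable_inner_L2 (E := ℝ) (hYj2 j) (hDj2 j)
    simpa [RCLike.inner_apply, mul_comm] using this
  have hzero : ∀ j, ∫ ω, Y ω j * (W ω j - V ω j) ∂μ = 0 := by
    intro j
    have hWjint := (hWj2 j).integrable one_le_two
    have hVjint := (hVj2 j).integrable one_le_two
    have hVjm : StronglyMeasurable[m] (fun ω => V ω j) :=
      (EuclideanSpace.proj (𝕜 := ℝ) j).continuous.comp_stronglyMeasurable hVm
    have hYjm : StronglyMeasurable[m] (fun ω => Y ω j) :=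
      (EuclideanSpace.proj (𝕜 := ℝ) j).continuous.comp_stronglyMeasurable hYm
    have hc := sgd_condexp_proj_eq hm hW1 hV1 hVm hmean j
    have hVc : μ[fun ω => V ω j | m] = fun ω => V ω j :=
      condExp_of_stronglyMeasurable hm hVjm hVjint
    have hDcond : μ[(fun ω => W ω j) - (fun ω => V ω j) | m] =ᵐ[μ] 0 := by
      filter_upwards [condExp_sub (m := m) hWjint hVjint, hc] with ω h1 h2
      rw [h1, Pi.sub_apply, hVc, h2]
      simp
    have hprodint : Integrable ((fun ω => Y ω j) * ((fun ω => W ω j) - (fun ω => V ω j))) μ :=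
      hprod_int j
    have hmul := condExp_mul_of_stronglyMeasurable_left hYjm hprodint
      ((hWjint.sub hVjint))
    have : ∫ ω, Y ω j * (W ω j - V ω j) ∂μ
        = ∫ ω, ((fun ω => Y ω j) * ((fun ω => W ω j) - (fun ω => V ω j))) ω ∂μ := rfl
    rw [this, ← integral_condExp (μ := μ) hm
      (f := (fun ω => Y ω j) * ((fun ω => W ω j) - (fun ω => V ω j)))]
    have hz : μ[(fun ω => Y ω j) * ((fun ω => W ω j) - (fun ω => V ω j)) | m] =ᵐ[μ] 0 := by
      filter_upwards [hmul, hDcond] with ω h1 h2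
      rw [h1, Pi.mul_apply, h2]
      simp
    rw [integral_congr_ae hz]
    simp
  have hsum : (fun ω => ⟪Y ω, W ω - V ω⟫) = fun ω => ∑ j, Y ω j * (W ω j - V ω j) := by
    funext ω
    simp [PiLp.inner_apply, RCLike.inner_apply, mul_comm]
  rw [hsum, integral_finset_sum _ (fun j _ => hprod_int j)]
  simp [hzero]

end Aux

set_option maxHeartbeats 1000000 in
/-- **Randomized-iterate guarantee for mini-batch SGD on weakly-quasi-convex functions.**
If `f` is `τ`-weakly-quasi-convex and `0 < h ≤ τ/(2L)` then for every `k`,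
with `φ_{k+1} = Σ_{i=0}^k ψ_i`,
`(1/φ_{k+1}) Σ_{i=0}^k ψ_i E[f(x_i) − f(x⋆)]
  ≤ ‖x₀ − x⋆‖²/(τ h φ_{k+1}) + (d h σ⋆²/(τ φ_{k+1})) Σ_{i=0}^k ψ_i²/b_i`. -/
theorem sgd_weighted_avg_suboptimality_bound_wqc
    {Ω : Type*} {m0 : MeasurableSpace Ω} {μ : Measure Ω} [IsProbabilityMeasure μ]
    {d : ℕ} (f : EuclideanSpace ℝ (Fin d) → ℝ) (L : ℝ)
    (hf : ContDiff ℝ 1 f)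
    (hL : ∀ x y : EuclideanSpace ℝ (Fin d), ‖gradient f x - gradient f y‖ ≤ L * ‖x - y‖)
    (xstar : EuclideanSpace ℝ (Fin d)) (hmin : ∀ x, f xstar ≤ f x)
    (τ : ℝ) (hτ : 0 < τ)
    (hwqc : ∀ z : EuclideanSpace ℝ (Fin d), τ * (f z - f xstar) ≤ ⟪gradient f z, z - xstar⟫)
    (ℱ : Filtration ℕ m0)
    (x G : ℕ → Ω → EuclideanSpace ℝ (Fin d))
    (x0 : EuclideanSpace ℝ (Fin d)) (hx0 : x 0 = fun _ => x0)
    (hx_meas : ∀ k, Measurable[ℱ k] (x k))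
    (σsq : ℝ) (hσsq : 0 ≤ σsq)
    (b : ℕ → ℝ) (hb : ∀ k, 1 ≤ b k)
    (h : ℝ) (hh : 0 < h)
    (ψ : ℕ → ℝ) (hψpos : ∀ k, 0 < ψ k) (hψle : ∀ k, ψ k ≤ 1)
    (hψ0 : ψ 0 = 1) (hψmono : ∀ k, ψ (k + 1) ≤ ψ k)
    (η : ℕ → ℝ) (hη : ∀ k, η k = h * ψ k)
    (hupdate : ∀ k ω, x (k + 1) ω = x k ω - η k • G k ω)
    (hG2 : ∀ k, MemLp (G k) 2 μ)
    (hGmean : ∀ k, μ[G k | ℱ k] =ᵐ[μ] fun ω => gradient f (x k ω))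
    (hGvar : ∀ k, ∀ᵐ ω ∂μ,
      (μ[fun ω' => ‖G k ω' - gradient f (x k ω')‖ ^ 2 | ℱ k]) ω ≤ d * σsq / b k)
    (hhτ : h ≤ τ / (2 * L))
    (k : ℕ) :
    (1 / ∑ i ∈ Finset.range (k + 1), ψ i) *
        ∑ i ∈ Finset.range (k + 1), ψ i * ∫ ω, (f (x i ω) - f xstar) ∂μ ≤
      ‖x0 - xstar‖ ^ 2 / (τ * h * ∑ i ∈ Finset.range (k + 1), ψ i)
        + (d * h * σsq / (τ * ∑ i ∈ Finset.range (k + 1), ψ i)) *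
            ∑ i ∈ Finset.range (k + 1), ψ i ^ 2 / b i := by
  -- positivity of L
  have hL0 : 0 < L := by
    by_contra hc
    push_neg at hc
    have : τ / (2 * L) ≤ 0 := by
      rcases lt_or_eq_of_le hc with hlt | heq
      · exact le_of_lt (div_neg_of_pos_of_neg hτ (by linarith))
      · rw [heq]; norm_num
    linarith
  -- gradient vanishes at the minimizer
  have gradstar : gradient f xstar = 0 := by
    have h1 : IsLocalMin f xstar := Filter.Eventually.of_forall hmin
    have h2 : fderiv ℝ f xstar = 0 := h1.fderiv_eq_zero
    simp [gradient, h2]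
  -- consequences of smoothness
  have descent := sgd_descent_aux f L hL0 hf hL
  have fnn : ∀ z, 0 ≤ f z - f xstar := fun z => sub_nonneg.mpr (hmin z)
  have fub : ∀ z, f z - f xstar ≤ L / 2 * ‖z - xstar‖ ^ 2 := by
    intro z
    have := descent xstar z
    rw [gradstar] at this
    simp at this
    linarith
  have gsq : ∀ z, ‖gradient f z‖ ^ 2 ≤ 2 * L * (f z - f xstar) := by
    intro z
    have hd := descent z (z - L⁻¹ • gradient f z)
    have hmin' := hmin (z - L⁻¹ • gradient f z)
    have e1 : z - L⁻¹ • gradient f z - z = -(L⁻¹ • gradient f z) := by abel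
    rw [e1] at hd
    have e2 : ⟪gradient f z, -(L⁻¹ • gradient f z)⟫ = -(L⁻¹ * ‖gradient f z‖ ^ 2) := by
      rw [inner_neg_right, real_inner_smul_right, real_inner_self_eq_norm_sq]
    have e3 : ‖-(L⁻¹ • gradient f z)‖ ^ 2 = L⁻¹ ^ 2 * ‖gradient f z‖ ^ 2 := by
      rw [norm_neg, norm_smul, mul_pow]
      simp [sq_abs]
    rw [e2, e3] at hd
    have hLi : L * L⁻¹ = 1 := mul_inv_cancel₀ hL0.ne'
    have e4 : L / 2 * (L⁻¹ ^ 2 * ‖gradient f z‖ ^ 2) = L⁻¹ * ‖gradient f z‖ ^ 2 / 2 := by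
      field_simp
    rw [e4] at hd
    have hS : L⁻¹ * ‖gradient f z‖ ^ 2 ≤ 2 * (f z - f xstar) := by linarith
    calc ‖gradient f z‖ ^ 2 = L * (L⁻¹ * ‖gradient f z‖ ^ 2) := by
          rw [← mul_assoc, hLi, one_mul]
      _ ≤ L * (2 * (f z - f xstar)) := mul_le_mul_of_nonneg_left hS hL0.le
      _ = 2 * L * (f z - f xstar) := by ring
  -- continuity of the gradient
  have hcontg : Continuous (gradient f) := by
    have : LipschitzWith (Real.toNNReal L) (gradient f) := by
      apply LipschitzWith.of_dist_le_mul
      intro a b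
      simpa [dist_eq_norm, Real.coe_toNNReal L hL0.le] using hL a b
    exact this.continuous
  -- measurability and integrability facts
  have hx_m0 : ∀ i, Measurable (x i) := fun i => (hx_meas i).mono (ℱ.le i) le_rfl
  have hx2 : ∀ i, MemLp (x i) 2 μ := by
    intro i
    induction i with
    | zero => rw [hx0]; exact memLp_const x0
    | succ n ih =>
      have : x (n + 1) = fun ω => x n ω - η n • G n ω := funext (hupdate n)
      rw [this]
      exact ih.sub ((hG2 n).const_smul (η n))
  have hA2 : ∀ i, MemLp (fun ω => x i ω - xstar) 2 μ := fun i =>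
    (hx2 i).sub (memLp_const xstar)
  have hgrad2 : ∀ i, MemLp (fun ω => gradient f (x i ω)) 2 μ := by
    intro i
    refine MemLp.of_le ((hA2 i).const_smul L) ?_ ?_
    · exact (hcontg.measurable.comp (hx_m0 i)).aestronglyMeasurable
    · filter_upwards with ω
      have := hL (x i ω) xstar
      rw [gradstar, sub_zero] at this
      simp only [Pi.smul_apply, norm_smul, Real.norm_eq_abs]
      calc ‖gradient f (x i ω)‖ ≤ L * ‖x i ω - xstar‖ := this
        _ ≤ |L| * ‖x i ω - xstar‖ :=
            mul_le_mul_of_nonneg_right (le_abs_self L) (norm_nonneg _)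
  have hD2 : ∀ i, MemLp (fun ω => G i ω - gradient f (x i ω)) 2 μ := fun i =>
    (hG2 i).sub (hgrad2 i)
  have hAsq_int : ∀ i, Integrable (fun ω => ‖x i ω - xstar‖ ^ 2) μ := by
    intro i
    have e : (fun ω => ‖x i ω - xstar‖ ^ 2)
        = fun ω => ⟪x i ω - xstar, x i ω - xstar⟫ :=
      funext fun ω => (real_inner_self_eq_norm_sq _).symm
    rw [e]
    exact sgd_integrable_inner_L2 (hA2 i) (hA2 i)
  have hgradsq_int : ∀ i, Integrable (fun ω => ‖gradient f (x i ω)‖ ^ 2) μ := by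
    intro i
    have e : (fun ω => ‖gradient f (x i ω)‖ ^ 2)
        = fun ω => ⟪gradient f (x i ω), gradient f (x i ω)⟫ :=
      funext fun ω => (real_inner_self_eq_norm_sq _).symm
    rw [e]
    exact sgd_integrable_inner_L2 (hgrad2 i) (hgrad2 i)
  have hDsq_int : ∀ i, Integrable
      (fun ω => ‖G i ω - gradient f (x i ω)‖ ^ 2) μ := by
    intro i
    have e : (fun ω => ‖G i ω - gradient f (x i ω)‖ ^ 2)
        = fun ω => ⟪G i ω - gradient f (x i ω), G i ω - gradient f (x i ω)⟫ :=
      funext fun ω => (real_inner_self_eq_norm_sq _).symm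
    rw [e]
    exact sgd_integrable_inner_L2 (hD2 i) (hD2 i)
  have hf_int : ∀ i, Integrable (fun ω => f (x i ω) - f xstar) μ := by
    intro i
    refine Integrable.mono ((hAsq_int i).const_mul (L / 2)) ?_ ?_
    · exact ((hf.continuous.measurable.comp (hx_m0 i)).sub
        measurable_const).aestronglyMeasurable
    · filter_upwards with ω
      rw [Real.norm_eq_abs, Real.norm_eq_abs, abs_of_nonneg (fnn _)]
      refine (fub _).trans (le_abs_self _)
  -- strong measurability w.r.t. the filtration
  have hxsm : ∀ i, StronglyMeasurable[ℱ i] (x i) := fun i => (hx_meas i).stronglyMeasurable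
  have hgradsm : ∀ i, StronglyMeasurable[ℱ i] (fun ω => gradient f (x i ω)) := fun i =>
    hcontg.comp_stronglyMeasurable (hxsm i)
  -- the two cross terms vanish
  have cross1 : ∀ i, ∫ ω, ⟪x i ω - xstar, G i ω - gradient f (x i ω)⟫ ∂μ = 0 := by
    intro i
    exact sgd_cross_zero (ℱ.le i) (hG2 i) (hgrad2 i) (hA2 i) (hgradsm i)
      ((hxsm i).sub stronglyMeasurable_const) (hGmean i)
  have cross2 : ∀ i, ∫ ω, ⟪gradient f (x i ω), G i ω - gradient f (x i ω)⟫ ∂μ = 0 := by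
    intro i
    exact sgd_cross_zero (ℱ.le i) (hG2 i) (hgrad2 i) (hgrad2 i) (hgradsm i)
      (hgradsm i) (hGmean i)
  -- variance bound
  have hvar : ∀ i, ∫ ω, ‖G i ω - gradient f (x i ω)‖ ^ 2 ∂μ ≤ d * σsq / b i := by
    intro i
    calc ∫ ω, ‖G i ω - gradient f (x i ω)‖ ^ 2 ∂μ
        = ∫ ω, (μ[fun ω' => ‖G i ω' - gradient f (x i ω')‖ ^ 2 | ℱ i]) ω ∂μ :=
          (integral_condExp (ℱ.le i)).symm
      _ ≤ ∫ _ω, (d * σsq / b i) ∂μ :=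
          integral_mono_ae integrable_condExp (integrable_const _) (hGvar i)
      _ = d * σsq / b i := by simp
  -- the key one-step inequality
  have hηnn : ∀ i, 0 ≤ η i := fun i => by rw [hη i]; exact mul_nonneg hh.le (hψpos i).le
  have hηle : ∀ i, 2 * L * η i ≤ τ := by
    intro i
    rw [hη i]
    have h1 : h * ψ i ≤ h := by
      nlinarith [hψle i, (hψpos i).le]
    have h2 : 2 * L * h ≤ τ := by
      calc 2 * L * h = h * (2 * L) := by ring
        _ ≤ τ := (le_div_iff₀ (by positivity : (0:ℝ) < 2 * L)).mp hhτ
    nlinarith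
  have key : ∀ i, ∫ ω, ‖x (i+1) ω - xstar‖ ^ 2 ∂μ
      ≤ ∫ ω, ‖x i ω - xstar‖ ^ 2 ∂μ
        - τ * η i * ∫ ω, (f (x i ω) - f xstar) ∂μ
        + η i ^ 2 * (d * σsq / b i) := by
    intro i
    have hpt : (fun ω => ‖x (i+1) ω - xstar‖ ^ 2)
        = fun ω => ‖x i ω - xstar‖ ^ 2
          - 2 * η i * ⟪x i ω - xstar, gradient f (x i ω)⟫
          - 2 * η i * ⟪x i ω - xstar, G i ω - gradient f (x i ω)⟫
          + η i ^ 2 * ‖gradient f (x i ω)‖ ^ 2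
          + 2 * η i ^ 2 * ⟪gradient f (x i ω), G i ω - gradient f (x i ω)⟫
          + η i ^ 2 * ‖G i ω - gradient f (x i ω)‖ ^ 2 := by
      funext ω
      have e : x (i+1) ω - xstar = (x i ω - xstar)
          - η i • (gradient f (x i ω) + (G i ω - gradient f (x i ω))) := by
        have eG : gradient f (x i ω) + (G i ω - gradient f (x i ω)) = G i ω := by abel
        rw [hupdate i ω, eG]
        abel
      rw [e, sgd_expand_sq]
    have I1 := hAsq_int i
    have I2 := sgd_integrable_inner_L2 (hA2 i) (hgrad2 i)
    have I3 := sgd_integrable_inner_L2 (hA2 i) (hD2 i)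
    have I4 := hgradsq_int i
    have I5 := sgd_integrable_inner_L2 (hgrad2 i) (hD2 i)
    have I6 := hDsq_int i
    have J2 := I2.const_mul (2 * η i)
    have J3 := I3.const_mul (2 * η i)
    have J4 := I4.const_mul (η i ^ 2)
    have J5 := I5.const_mul (2 * η i ^ 2)
    have J6 := I6.const_mul (η i ^ 2)
    have Ei : ∫ ω, ‖x (i+1) ω - xstar‖ ^ 2 ∂μ
        = ∫ ω, ‖x i ω - xstar‖ ^ 2 ∂μ
          - 2 * η i * ∫ ω, ⟪x i ω - xstar, gradient f (x i ω)⟫ ∂μ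
          - 2 * η i * ∫ ω, ⟪x i ω - xstar, G i ω - gradient f (x i ω)⟫ ∂μ
          + η i ^ 2 * ∫ ω, ‖gradient f (x i ω)‖ ^ 2 ∂μ
          + 2 * η i ^ 2 * ∫ ω, ⟪gradient f (x i ω), G i ω - gradient f (x i ω)⟫ ∂μ
          + η i ^ 2 * ∫ ω, ‖G i ω - gradient f (x i ω)‖ ^ 2 ∂μ := by
      have K2 : Integrable (fun ω => ‖x i ω - xstar‖ ^ 2
          - 2 * η i * ⟪x i ω - xstar, gradient f (x i ω)⟫) μ := I1.sub J2
      have K3 : Integrable (fun ω => ‖x i ω - xstar‖ ^ 2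
          - 2 * η i * ⟪x i ω - xstar, gradient f (x i ω)⟫
          - 2 * η i * ⟪x i ω - xstar, G i ω - gradient f (x i ω)⟫) μ := K2.sub J3
      have K4 : Integrable (fun ω => ‖x i ω - xstar‖ ^ 2
          - 2 * η i * ⟪x i ω - xstar, gradient f (x i ω)⟫
          - 2 * η i * ⟪x i ω - xstar, G i ω - gradient f (x i ω)⟫
          + η i ^ 2 * ‖gradient f (x i ω)‖ ^ 2) μ := K3.add J4
      have K5 : Integrable (fun ω => ‖x i ω - xstar‖ ^ 2
          - 2 * η i * ⟪x i ω - xstar, gradient f (x i ω)⟫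
          - 2 * η i * ⟪x i ω - xstar, G i ω - gradient f (x i ω)⟫
          + η i ^ 2 * ‖gradient f (x i ω)‖ ^ 2
          + 2 * η i ^ 2 * ⟪gradient f (x i ω), G i ω - gradient f (x i ω)⟫) μ := K4.add J5
      rw [hpt, integral_add K5 J6, integral_add K4 J5, integral_add K3 J4,
        integral_sub K2 J3, integral_sub I1 J2,
        integral_const_mul, integral_const_mul, integral_const_mul, integral_const_mul, integral_const_mul]
    rw [Ei, cross1 i, cross2 i]
    have hF : 0 ≤ ∫ ω, (f (x i ω) - f xstar) ∂μ := integral_nonneg fun ω => fnn _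
    have hP : τ * ∫ ω, (f (x i ω) - f xstar) ∂μ
        ≤ ∫ ω, ⟪x i ω - xstar, gradient f (x i ω)⟫ ∂μ := by
      rw [← integral_const_mul]
      refine integral_mono ((hf_int i).const_mul τ) I2 fun ω => ?_
      rw [real_inner_comm]
      exact hwqc (x i ω)
    have hQ : ∫ ω, ‖gradient f (x i ω)‖ ^ 2 ∂μ
        ≤ 2 * L * ∫ ω, (f (x i ω) - f xstar) ∂μ := by
      rw [← integral_const_mul]
      exact integral_mono I4 ((hf_int i).const_mul (2 * L)) fun ω => gsq (x i ω)
    have hV := hvar i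
    have hmix : η i ^ 2 * (2 * L * ∫ ω, (f (x i ω) - f xstar) ∂μ)
        ≤ τ * η i * ∫ ω, (f (x i ω) - f xstar) ∂μ := by
      nlinarith [mul_nonneg (hηnn i) hF, hηle i,
        mul_nonneg (sub_nonneg.mpr (hηle i)) (mul_nonneg (hηnn i) hF)]
    have h1 : η i ^ 2 * ∫ ω, ‖gradient f (x i ω)‖ ^ 2 ∂μ
        ≤ η i ^ 2 * (2 * L * ∫ ω, (f (x i ω) - f xstar) ∂μ) :=
      mul_le_mul_of_nonneg_left hQ (sq_nonneg _)
    have h2 : η i ^ 2 * ∫ ω, ‖G i ω - gradient f (x i ω)‖ ^ 2 ∂μ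
        ≤ η i ^ 2 * (d * σsq / b i) := mul_le_mul_of_nonneg_left hV (sq_nonneg _)
    have h3 : 2 * η i * (τ * ∫ ω, (f (x i ω) - f xstar) ∂μ)
        ≤ 2 * η i * ∫ ω, ⟪x i ω - xstar, gradient f (x i ω)⟫ ∂μ :=
      mul_le_mul_of_nonneg_left hP (by linarith [hηnn i])
    nlinarith [h1, h2, h3, hmix]
  -- telescoping
  have tel : ∀ n, ∫ ω, ‖x n ω - xstar‖ ^ 2 ∂μ
      + ∑ i ∈ Finset.range n, τ * η i * ∫ ω, (f (x i ω) - f xstar) ∂μ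
      ≤ ‖x0 - xstar‖ ^ 2 + ∑ i ∈ Finset.range n, η i ^ 2 * (d * σsq / b i) := by
    intro n
    induction n with
    | zero => simp [hx0]
    | succ n ih =>
      rw [Finset.sum_range_succ, Finset.sum_range_succ]
      have := key n
      linarith
  -- conclude
  have hS : 0 < ∑ i ∈ Finset.range (k + 1), ψ i :=
    Finset.sum_pos (fun i _ => hψpos i) ⟨0, Finset.mem_range.mpr (Nat.succ_pos k)⟩
  have hxk1 : 0 ≤ ∫ ω, ‖x (k+1) ω - xstar‖ ^ 2 ∂μ := integral_nonneg fun ω => sq_nonneg _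
  have htel := tel (k + 1)
  have hsum1 : ∑ i ∈ Finset.range (k + 1), τ * η i * ∫ ω, (f (x i ω) - f xstar) ∂μ
      = τ * h * ∑ i ∈ Finset.range (k + 1), ψ i * ∫ ω, (f (x i ω) - f xstar) ∂μ := by
    rw [Finset.mul_sum]
    refine Finset.sum_congr rfl fun i _ => ?_
    rw [hη i]
    ring
  have hsum2 : ∑ i ∈ Finset.range (k + 1), η i ^ 2 * (d * σsq / b i)
      = h ^ 2 * (d * σsq) * ∑ i ∈ Finset.range (k + 1), ψ i ^ 2 / b i := by
    rw [Finset.mul_sum]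
    refine Finset.sum_congr rfl fun i _ => ?_
    rw [hη i]
    ring
  have Htel : τ * h * (∑ i ∈ Finset.range (k + 1), ψ i * ∫ ω, (f (x i ω) - f xstar) ∂μ)
      ≤ ‖x0 - xstar‖ ^ 2
        + h ^ 2 * (d * σsq) * ∑ i ∈ Finset.range (k + 1), ψ i ^ 2 / b i := by
    rw [← hsum1, ← hsum2]
    linarith
  have hTle : (∑ i ∈ Finset.range (k + 1), ψ i * ∫ ω, (f (x i ω) - f xstar) ∂μ)
      ≤ (‖x0 - xstar‖ ^ 2
          + h ^ 2 * (d * σsq) * ∑ i ∈ Finset.range (k + 1), ψ i ^ 2 / b i) / (τ * h) := by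
    rw [le_div_iff₀ (by positivity : (0:ℝ) < τ * h)]
    linarith
  calc (1 / ∑ i ∈ Finset.range (k + 1), ψ i) *
        ∑ i ∈ Finset.range (k + 1), ψ i * ∫ ω, (f (x i ω) - f xstar) ∂μ
      ≤ (1 / ∑ i ∈ Finset.range (k + 1), ψ i) *
          ((‖x0 - xstar‖ ^ 2
            + h ^ 2 * (d * σsq) * ∑ i ∈ Finset.range (k + 1), ψ i ^ 2 / b i) / (τ * h)) := by
        exact mul_le_mul_of_nonneg_left hTle (by positivity)
    _ = ‖x0 - xstar‖ ^ 2 / (τ * h * ∑ i ∈ Finset.range (k + 1), ψ i)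
        + (d * h * σsq / (τ * ∑ i ∈ Finset.range (k + 1), ψ i)) *
            ∑ i ∈ Finset.range (k + 1), ψ i ^ 2 / b i := by
        field_simp
end

section
/- Under the SGD setup with f τ-weakly-quasi-convex, if η_k ≤ τ/(2L) then the expected squared distance to the minimizer satisfies the one-step bound E[½‖x_{k+1} − x⋆‖²] − E[½‖x_k − x⋆‖²] ≤ −(τ η_k / 2) · E[f(x_k) − f(x⋆)] + η_k² d σ⋆² / (2 b_k). -/
open MeasureTheory Filter
open scoped RealInnerProductSpace

lemma aux_condExp_clm {Ω : Type*} {m m0 : MeasurableSpace Ω} {μ : Measure Ω}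
    [IsFiniteMeasure μ] (hm : m ≤ m0)
    {E F : Type*} [NormedAddCommGroup E] [NormedSpace ℝ E] [CompleteSpace E]
    [NormedAddCommGroup F] [NormedSpace ℝ F] [CompleteSpace F]
    (T : E →L[ℝ] F) {Y : Ω → E} (hY : Integrable Y μ) :
    (μ[fun ω => T (Y ω)|m]) =ᵐ[μ] fun ω => T ((μ[Y|m]) ω) := by
  haveI : IsFiniteMeasure (μ.trim hm) := isFiniteMeasure_trim hm
  refine (ae_eq_condExp_of_forall_setIntegral_eq hm (T.integrable_comp hY)
    (fun s _ _ => (T.integrable_comp integrable_condExp).integrableOn)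
    (fun s hs hμs => ?_) ?_).symm
  · rw [T.integral_comp_comm integrable_condExp.integrableOn,
      T.integral_comp_comm hY.integrableOn,
      setIntegral_condExp hm hY hs]
  · exact AEStronglyMeasurable.congr
      (StronglyMeasurable.aestronglyMeasurable
        (T.continuous.comp_stronglyMeasurable stronglyMeasurable_condExp))
      (Eventually.of_forall fun _ => rfl)

lemma aux_inner_integrable {Ω : Type*} {m0 : MeasurableSpace Ω} {μ : Measure Ω}
    {n : ℕ} {u w : Ω → EuclideanSpace ℝ (Fin n)}
    (hu : MemLp u 2 μ) (hw : MemLp w 2 μ) :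
    Integrable (fun ω => ⟪u ω, w ω⟫) μ := by
  have hu2 : Integrable (fun ω => ‖u ω‖ ^ 2) μ :=
    (memLp_two_iff_integrable_sq_norm hu.1).mp hu
  have hw2 : Integrable (fun ω => ‖w ω‖ ^ 2) μ :=
    (memLp_two_iff_integrable_sq_norm hw.1).mp hw
  refine Integrable.mono' ((hu2.add hw2).div_const 2) (hu.1.inner hw.1)
    (Eventually.of_forall fun ω => ?_)
  have h1 : ‖⟪u ω, w ω⟫‖ ≤ ‖u ω‖ * ‖w ω‖ := norm_inner_le_norm _ _
  simp only [Pi.add_apply]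
  nlinarith [sq_nonneg (‖u ω‖ - ‖w ω‖), norm_nonneg (u ω), norm_nonneg (w ω)]

lemma aux_ortho {Ω : Type*} {m m0 : MeasurableSpace Ω} {μ : Measure Ω}
    [IsProbabilityMeasure μ] (hm : m ≤ m0)
    {n : ℕ} {v Y : Ω → EuclideanSpace ℝ (Fin n)}
    (hvm : Measurable[m] v)
    (hv : MemLp v 2 μ) (hY : MemLp Y 2 μ)
    (hY0 : (μ[Y|m]) =ᵐ[μ] 0) :
    ∫ ω, ⟪v ω, Y ω⟫ ∂μ = 0 := by
  haveI : IsFiniteMeasure (μ.trim hm) := isFiniteMeasure_trim hm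
  have hinner : ∀ ω, ⟪v ω, Y ω⟫ = ∑ i : Fin n, v ω i * Y ω i := by
    intro ω
    simp [PiLp.inner_apply, RCLike.inner_apply, mul_comm]
  have hint : ∀ i : Fin n, Integrable (fun ω => v ω i * Y ω i) μ := by
    intro i
    have h1 : MemLp (fun ω => v ω i) 2 μ := by
      exact (EuclideanSpace.proj (𝕜 := ℝ) i).comp_memLp' hv
    have h2 : MemLp (fun ω => Y ω i) 2 μ := by
      exact (EuclideanSpace.proj (𝕜 := ℝ) i).comp_memLp' hY
    have h1' : Integrable (fun ω => (fun ω => v ω i) ω ^ 2) μ :=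
      (memLp_two_iff_integrable_sq h1.1).mp h1
    have h2' : Integrable (fun ω => (fun ω => Y ω i) ω ^ 2) μ :=
      (memLp_two_iff_integrable_sq h2.1).mp h2
    refine Integrable.mono' ((h1'.add h2').div_const 2) (h1.1.mul h2.1)
      (Eventually.of_forall fun ω => ?_)
    simp only [Real.norm_eq_abs, abs_mul, Pi.add_apply]
    nlinarith [sq_nonneg (|v ω i| - |Y ω i|), abs_nonneg (v ω i), abs_nonneg (Y ω i),
      sq_abs (v ω i), sq_abs (Y ω i)]
  calc ∫ ω, ⟪v ω, Y ω⟫ ∂μ = ∫ ω, ∑ i : Fin n, v ω i * Y ω i ∂μ := by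
        simp_rw [hinner]
    _ = ∑ i : Fin n, ∫ ω, v ω i * Y ω i ∂μ := integral_finset_sum _ fun i _ => hint i
    _ = 0 := by
      refine Finset.sum_eq_zero fun i _ => ?_
      have hYi : Integrable (fun ω => Y ω i) μ := by
        have := (EuclideanSpace.proj (𝕜 := ℝ) i).integrable_comp (hY.integrable (by norm_num))
        simpa [Function.comp] using this
      have hcond : (μ[fun ω => v ω i * Y ω i|m]) =ᵐ[μ]
          (fun ω => v ω i) * (μ[fun ω => Y ω i|m]) := by
        refine condExp_mul_of_stronglyMeasurable_left ?_ ?_ hYi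
        · exact (Measurable.stronglyMeasurable (by
            exact (EuclideanSpace.proj (𝕜 := ℝ) i).continuous.measurable.comp hvm))
        · exact hint i
      have hYi0 : (μ[fun ω => Y ω i|m]) =ᵐ[μ] 0 := by
        have h3 := aux_condExp_clm hm (EuclideanSpace.proj (𝕜 := ℝ) i)
          (hY.integrable (by norm_num))
        refine h3.trans ?_
        filter_upwards [hY0] with ω hω
        simp [hω]
      have heq : (μ[fun ω => v ω i * Y ω i|m]) =ᵐ[μ] 0 := by
        refine hcond.trans ?_
        filter_upwards [hYi0] with ω hω
        simp [hω]
      rw [← integral_condExp (μ := μ) (f := fun ω => v ω i * Y ω i) hm]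
      rw [integral_congr_ae heq]
      simp

lemma aux_grad_inner {n : ℕ} (f : EuclideanSpace ℝ (Fin n) → ℝ) (z v : EuclideanSpace ℝ (Fin n)) :
    ⟪gradient f z, v⟫ = fderiv ℝ f z v := by
  rw [gradient, ← InnerProductSpace.toDual_apply_apply]
  simp

lemma aux_descent {n : ℕ} (f : EuclideanSpace ℝ (Fin n) → ℝ) (L : ℝ)
    (hf : ContDiff ℝ 1 f)
    (hL : ∀ x y : EuclideanSpace ℝ (Fin n), ‖gradient f x - gradient f y‖ ≤ L * ‖x - y‖)
    (x y : EuclideanSpace ℝ (Fin n)) :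
    f y ≤ f x + ⟪gradient f x, y - x⟫ + L / 2 * ‖y - x‖ ^ 2 := by
  set v := y - x with hv
  have hγ : Continuous fun t : ℝ => x + t • v :=
    continuous_const.add (continuous_id.smul continuous_const)
  set φ' : ℝ → ℝ := fun t => fderiv ℝ f (x + t • v) v with hφ'
  have hφ'cont : Continuous φ' :=
    (ContinuousLinearMap.apply ℝ ℝ v).continuous.comp
      ((hf.continuous_fderiv one_ne_zero).comp hγ)
  have hderiv : ∀ t ∈ Set.uIcc (0:ℝ) 1, HasDerivAt (fun t => f (x + t • v)) (φ' t) t := by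
    intro t _
    have h1 : HasDerivAt (fun t : ℝ => x + t • v) v t := by
      simpa using ((hasDerivAt_id t).smul_const v).const_add x
    have h2 : HasFDerivAt f (fderiv ℝ f (x + t • v)) (x + t • v) :=
      (hf.differentiable one_ne_zero _).hasFDerivAt
    exact h2.comp_hasDerivAt t h1
  have hFTC : ∫ t in (0:ℝ)..1, φ' t = f (x + (1:ℝ) • v) - f (x + (0:ℝ) • v) :=
    intervalIntegral.integral_eq_sub_of_hasDerivAt hderiv (hφ'cont.intervalIntegrable 0 1)
  have hfy : f y - f x = ∫ t in (0:ℝ)..1, φ' t := by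
    rw [hFTC]; simp [hv]
  have hbound : ∀ t ∈ Set.Icc (0:ℝ) 1, φ' t ≤ ⟪gradient f x, v⟫ + L * t * ‖v‖ ^ 2 := by
    intro t ht
    have h3 : φ' t - ⟪gradient f x, v⟫ = ⟪gradient f (x + t • v) - gradient f x, v⟫ := by
      rw [inner_sub_left, aux_grad_inner, aux_grad_inner, hφ']
    have h4 : ⟪gradient f (x + t • v) - gradient f x, v⟫ ≤ L * t * ‖v‖ ^ 2 := by
      calc ⟪gradient f (x + t • v) - gradient f x, v⟫
          ≤ ‖gradient f (x + t • v) - gradient f x‖ * ‖v‖ := real_inner_le_norm _ _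
        _ ≤ (L * ‖x + t • v - x‖) * ‖v‖ :=
            mul_le_mul_of_nonneg_right (hL _ _) (norm_nonneg _)
        _ = L * t * ‖v‖ ^ 2 := by
            have hn : ‖x + t • v - x‖ = t * ‖v‖ := by
              simp [norm_smul, abs_of_nonneg ht.1]
            rw [hn]; ring
    linarith
  have hc2 : Continuous fun t : ℝ => ⟪gradient f x, v⟫ + L * t * ‖v‖ ^ 2 :=
    continuous_const.add ((continuous_const.mul continuous_id).mul continuous_const)
  have hint : ∫ t in (0:ℝ)..1, φ' t ≤
      ∫ t in (0:ℝ)..1, (⟪gradient f x, v⟫ + L * t * ‖v‖ ^ 2) :=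
    intervalIntegral.integral_mono_on zero_le_one (hφ'cont.intervalIntegrable 0 1)
      (hc2.intervalIntegrable 0 1) hbound
  have hval : ∫ t in (0:ℝ)..1, (⟪gradient f x, v⟫ + L * t * ‖v‖ ^ 2)
      = ⟪gradient f x, v⟫ + L / 2 * ‖v‖ ^ 2 := by
    rw [intervalIntegral.integral_add (intervalIntegrable_const)
      (Continuous.intervalIntegrable (by fun_prop) 0 1)]
    simp only [intervalIntegral.integral_const, smul_eq_mul, mul_one, sub_zero]
    have h5 : ∫ t in (0:ℝ)..1, L * t * ‖v‖ ^ 2 = L * ‖v‖^2 * ∫ t in (0:ℝ)..1, t := by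
      rw [← intervalIntegral.integral_const_mul]
      congr 1; ext t; ring
    rw [h5, integral_id]
    ring
  linarith [hfy, hint.trans_eq hval]

lemma aux_gradsq {n : ℕ} (f : EuclideanSpace ℝ (Fin n) → ℝ) (L : ℝ) (hLpos : 0 < L)
    (hf : ContDiff ℝ 1 f)
    (hL : ∀ x y : EuclideanSpace ℝ (Fin n), ‖gradient f x - gradient f y‖ ≤ L * ‖x - y‖)
    (xstar : EuclideanSpace ℝ (Fin n)) (hmin : ∀ x, f xstar ≤ f x)
    (z : EuclideanSpace ℝ (Fin n)) :
    ‖gradient f z‖ ^ 2 ≤ 2 * L * (f z - f xstar) := by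
  have h := aux_descent f L hf hL z (z - (1/L) • gradient f z)
  have h1 : ⟪gradient f z, z - (1/L) • gradient f z - z⟫ = -(1/L) * ‖gradient f z‖^2 := by
    rw [show z - (1/L) • gradient f z - z = -((1/L) • gradient f z) by abel]
    rw [inner_neg_right, real_inner_smul_right, real_inner_self_eq_norm_sq]
    ring
  have h2 : ‖z - (1/L) • gradient f z - z‖ ^ 2 = (1/L)^2 * ‖gradient f z‖^2 := by
    rw [show z - (1/L) • gradient f z - z = -((1/L) • gradient f z) by abel]
    rw [norm_neg, norm_smul, mul_pow]
    rw [Real.norm_eq_abs, sq_abs]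
  rw [h1, h2] at h
  have h3 := hmin (z - (1/L) • gradient f z)
  have hL' : L ≠ 0 := ne_of_gt hLpos
  have h6 : f xstar ≤ f z - 1/(2*L) * ‖gradient f z‖^2 := by
    calc f xstar ≤ f (z - (1/L) • gradient f z) := h3
      _ ≤ f z + -(1/L) * ‖gradient f z‖^2 + L/2 * ((1/L)^2 * ‖gradient f z‖^2) := h
      _ = f z - 1/(2*L) * ‖gradient f z‖^2 := by field_simp; ring
  have h4 : 1/(2*L) * ‖gradient f z‖^2 ≤ f z - f xstar := by linarith
  calc ‖gradient f z‖^2 = 2*L * (1/(2*L) * ‖gradient f z‖^2) := by field_simp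
    _ ≤ 2*L*(f z - f xstar) := by
      have := mul_le_mul_of_nonneg_left h4 (le_of_lt (by positivity : (0:ℝ) < 2*L))
      linarith

set_option maxHeartbeats 1000000 in
/-- **One-step decrease of the expected squared distance for mini-batch SGD
on weakly-quasi-convex functions.** If `f` is `τ`-weakly-quasi-convex and `η_k ≤ τ/(2L)`, then
`E[½‖x_{k+1} − x⋆‖²] − E[½‖x_k − x⋆‖²]
  ≤ −(τ η_k/2) E[f(x_k) − f(x⋆)] + η_k² d σ⋆²/(2 b_k)`. -/
theorem sgd_one_step_distance_decrease_wqc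
    {Ω : Type*} {m0 : MeasurableSpace Ω} {μ : Measure Ω} [IsProbabilityMeasure μ]
    {d : ℕ} (f : EuclideanSpace ℝ (Fin d) → ℝ) (L : ℝ)
    (hf : ContDiff ℝ 1 f)
    (hL : ∀ x y : EuclideanSpace ℝ (Fin d), ‖gradient f x - gradient f y‖ ≤ L * ‖x - y‖)
    (xstar : EuclideanSpace ℝ (Fin d)) (hmin : ∀ x, f xstar ≤ f x)
    (τ : ℝ) (hτ : 0 < τ)
    (hwqc : ∀ z : EuclideanSpace ℝ (Fin d), τ * (f z - f xstar) ≤ ⟪gradient f z, z - xstar⟫)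
    (ℱ : Filtration ℕ m0)
    (x G : ℕ → Ω → EuclideanSpace ℝ (Fin d))
    (x0 : EuclideanSpace ℝ (Fin d)) (hx0 : x 0 = fun _ => x0)
    (hx_meas : ∀ k, Measurable[ℱ k] (x k))
    (σsq : ℝ) (hσsq : 0 ≤ σsq)
    (b : ℕ → ℝ) (hb : ∀ k, 1 ≤ b k)
    (h : ℝ) (hh : 0 < h)
    (ψ : ℕ → ℝ) (hψpos : ∀ k, 0 < ψ k) (hψle : ∀ k, ψ k ≤ 1)
    (hψ0 : ψ 0 = 1) (hψmono : ∀ k, ψ (k + 1) ≤ ψ k)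
    (η : ℕ → ℝ) (hη : ∀ k, η k = h * ψ k)
    (hupdate : ∀ k ω, x (k + 1) ω = x k ω - η k • G k ω)
    (hG2 : ∀ k, MemLp (G k) 2 μ)
    (hGmean : ∀ k, μ[G k | ℱ k] =ᵐ[μ] fun ω => gradient f (x k ω))
    (hGvar : ∀ k, ∀ᵐ ω ∂μ,
      (μ[fun ω' => ‖G k ω' - gradient f (x k ω')‖ ^ 2 | ℱ k]) ω ≤ d * σsq / b k)
    (k : ℕ) :
    η k ≤ τ / (2 * L) →
      (∫ ω, (1 / 2) * ‖x (k + 1) ω - xstar‖ ^ 2 ∂μ) - ∫ ω, (1 / 2) * ‖x k ω - xstar‖ ^ 2 ∂μ ≤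
        -(τ * η k / 2) * ∫ ω, (f (x k ω) - f xstar) ∂μ + η k ^ 2 * d * σsq / (2 * b k) := by
  intro hηL
  have hm : ℱ k ≤ m0 := ℱ.le k
  have ha : 0 < η k := by rw [hη]; exact mul_pos hh (hψpos k)
  have hLpos : 0 < L := by
    by_contra hc
    push_neg at hc
    have h2L : 2 * L ≤ 0 := by linarith
    have h3 : τ / (2 * L) ≤ 0 := by
      rcases lt_or_eq_of_le h2L with h' | h'
      · exact le_of_lt (div_neg_of_pos_of_neg hτ h')
      · rw [h', div_zero]
    linarith
  have hbk : (0:ℝ) < b k := lt_of_lt_of_le one_pos (hb k)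
  -- MemLp of iterates
  have hXmem : ∀ j, MemLp (x j) 2 μ := by
    intro j
    induction j with
    | zero => rw [hx0]; exact memLp_const x0
    | succ j ih =>
      have hxe : x (j+1) = x j - η j • G j := by
        funext ω; rw [hupdate j ω]; rfl
      rw [hxe]
      exact ih.sub ((hG2 j).const_smul (η j))
  -- gradient facts
  have hgc : Continuous (gradient f) := by
    have h1 : Continuous (fderiv ℝ f) := hf.continuous_fderiv one_ne_zero
    exact (InnerProductSpace.toDual ℝ _).symm.continuous.comp h1
  have hgrad0 : gradient f xstar = 0 := by
    have hloc : IsLocalMin f xstar := Eventually.of_forall hmin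
    rw [gradient, hloc.fderiv_eq_zero]
    simp
  -- measurability
  have hXm : Measurable[ℱ k] (x k) := hx_meas k
  have hum : Measurable[ℱ k] (fun ω => x k ω - xstar) := hXm.sub measurable_const
  have hgm : Measurable[ℱ k] (fun ω => gradient f (x k ω)) := hgc.measurable.comp hXm
  -- MemLp
  have humem : MemLp (fun ω => x k ω - xstar) 2 μ := (hXmem k).sub (memLp_const xstar)
  have hgmem : MemLp (fun ω => gradient f (x k ω)) 2 μ := by
    refine MemLp.of_le_mul (c := L) humem
      ((hgm.mono hm le_rfl).stronglyMeasurable.aestronglyMeasurable) ?_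
    refine Eventually.of_forall fun ω => ?_
    calc ‖gradient f (x k ω)‖ = ‖gradient f (x k ω) - gradient f xstar‖ := by
          rw [hgrad0, sub_zero]
      _ ≤ L * ‖x k ω - xstar‖ := hL _ _
  have hYmem : MemLp (fun ω => G k ω - gradient f (x k ω)) 2 μ := (hG2 k).sub hgmem
  -- conditional expectation of noise is 0
  have hY0 : (μ[fun ω => G k ω - gradient f (x k ω)|ℱ k]) =ᵐ[μ] 0 := by
    have hsub : (μ[fun ω => G k ω - gradient f (x k ω)|ℱ k]) =ᵐ[μ]
        (μ[G k|ℱ k]) - (μ[fun ω => gradient f (x k ω)|ℱ k]) := by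
      have := condExp_sub (m := ℱ k) ((hG2 k).integrable (by norm_num))
        (hgmem.integrable (by norm_num))
      exact this
    have hgce : (μ[fun ω => gradient f (x k ω)|ℱ k]) = fun ω => gradient f (x k ω) :=
      condExp_of_stronglyMeasurable hm
        (hgm.stronglyMeasurable) (hgmem.integrable (by norm_num))
    filter_upwards [hsub, hGmean k] with ω h1 h2
    rw [Pi.zero_apply, h1, Pi.sub_apply, h2, hgce]
    simp
  -- orthogonality
  have hortho1 : ∫ ω, ⟪x k ω - xstar, G k ω - gradient f (x k ω)⟫ ∂μ = 0 :=
    aux_ortho hm hum humem hYmem hY0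
  have hortho2 : ∫ ω, ⟪gradient f (x k ω), G k ω - gradient f (x k ω)⟫ ∂μ = 0 :=
    aux_ortho hm hgm hgmem hYmem hY0
  -- integrability of the integrands
  have intu2 : Integrable (fun ω => ‖x k ω - xstar‖^2) μ :=
    (memLp_two_iff_integrable_sq_norm humem.1).mp humem
  have intG2 : Integrable (fun ω => ‖G k ω‖^2) μ :=
    (memLp_two_iff_integrable_sq_norm (hG2 k).1).mp (hG2 k)
  have intg2 : Integrable (fun ω => ‖gradient f (x k ω)‖^2) μ :=
    (memLp_two_iff_integrable_sq_norm hgmem.1).mp hgmem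
  have intY2 : Integrable (fun ω => ‖G k ω - gradient f (x k ω)‖^2) μ :=
    (memLp_two_iff_integrable_sq_norm hYmem.1).mp hYmem
  have intuG : Integrable (fun ω => ⟪x k ω - xstar, G k ω⟫) μ :=
    aux_inner_integrable humem (hG2 k)
  have intug : Integrable (fun ω => ⟪x k ω - xstar, gradient f (x k ω)⟫) μ :=
    aux_inner_integrable humem hgmem
  have intuY : Integrable (fun ω => ⟪x k ω - xstar, G k ω - gradient f (x k ω)⟫) μ :=
    aux_inner_integrable humem hYmem
  have intgY : Integrable (fun ω => ⟪gradient f (x k ω), G k ω - gradient f (x k ω)⟫) μ :=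
    aux_inner_integrable hgmem hYmem
  -- integrability of f ∘ x k - f xstar
  have intfX : Integrable (fun ω => f (x k ω) - f xstar) μ := by
    refine Integrable.mono' (intug.div_const τ)
      (((hf.continuous.comp_aestronglyMeasurable
        ((hXm.mono hm le_rfl).stronglyMeasurable.aestronglyMeasurable)).sub
        aestronglyMeasurable_const)) (Eventually.of_forall fun ω => ?_)
    rw [Real.norm_eq_abs, abs_of_nonneg (by linarith [hmin (x k ω)])]
    rw [le_div_iff₀ hτ]
    have := hwqc (x k ω)
    have hsymm : ⟪gradient f (x k ω), x k ω - xstar⟫ =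
      ⟪x k ω - xstar, gradient f (x k ω)⟫ := real_inner_comm _ _
    linarith
  have hF0 : 0 ≤ ∫ ω, (f (x k ω) - f xstar) ∂μ :=
    integral_nonneg fun ω => sub_nonneg.2 (hmin _)
  -- pointwise expansion of the squared norm
  have hpt : ∀ ω, (1/2 : ℝ) * ‖x (k+1) ω - xstar‖^2 =
      (1/2) * ‖x k ω - xstar‖^2 - η k * ⟪x k ω - xstar, G k ω⟫
        + η k^2/2 * ‖G k ω‖^2 := by
    intro ω
    rw [hupdate k ω, show x k ω - η k • G k ω - xstar = (x k ω - xstar) - η k • G k ω by abel]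
    rw [norm_sub_sq_real, real_inner_smul_right, norm_smul, mul_pow, Real.norm_eq_abs, sq_abs]
    ring
  -- expand the integral
  have hsplit : ∫ ω, (1/2 : ℝ) * ‖x (k+1) ω - xstar‖^2 ∂μ =
      (∫ ω, (1/2 : ℝ) * ‖x k ω - xstar‖^2 ∂μ)
        - η k * (∫ ω, ⟪x k ω - xstar, G k ω⟫ ∂μ)
        + η k^2/2 * (∫ ω, ‖G k ω‖^2 ∂μ) := by
    rw [show (fun ω => (1/2 : ℝ) * ‖x (k+1) ω - xstar‖^2) = fun ω =>
      (1/2) * ‖x k ω - xstar‖^2 - η k * ⟪x k ω - xstar, G k ω⟫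
        + η k^2/2 * ‖G k ω‖^2 from funext hpt]
    have i1 : Integrable (fun ω => (1/2 : ℝ) * ‖x k ω - xstar‖^2
        - η k * ⟪x k ω - xstar, G k ω⟫) μ :=
      (intu2.const_mul (1/2)).sub (intuG.const_mul (η k))
    have i2 : Integrable (fun ω => η k^2/2 * ‖G k ω‖^2) μ := intG2.const_mul (η k^2/2)
    rw [integral_add i1 i2,
      integral_sub (intu2.const_mul (1/2)) (intuG.const_mul (η k)),
      integral_const_mul, integral_const_mul, integral_const_mul]
  -- lower bound on the inner product integral
  have hI1 : τ * (∫ ω, (f (x k ω) - f xstar) ∂μ) ≤ ∫ ω, ⟪x k ω - xstar, G k ω⟫ ∂μ := by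
    have hdecomp : ∫ ω, ⟪x k ω - xstar, G k ω⟫ ∂μ =
        (∫ ω, ⟪x k ω - xstar, gradient f (x k ω)⟫ ∂μ)
          + ∫ ω, ⟪x k ω - xstar, G k ω - gradient f (x k ω)⟫ ∂μ := by
      rw [← integral_add intug intuY]
      congr 1; funext ω
      rw [← inner_add_right]
      congr 1; abel
    rw [hdecomp, hortho1, add_zero, ← integral_const_mul]
    refine integral_mono (intfX.const_mul τ) intug fun ω => ?_
    have h1 := hwqc (x k ω)
    have hsymm : ⟪gradient f (x k ω), x k ω - xstar⟫ =
      ⟪x k ω - xstar, gradient f (x k ω)⟫ := real_inner_comm _ _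
    dsimp only
    linarith
  -- upper bound on the second moment integral
  have hI2 : ∫ ω, ‖G k ω‖^2 ∂μ ≤
      2 * L * (∫ ω, (f (x k ω) - f xstar) ∂μ) + d * σsq / b k := by
    have hdecomp : ∫ ω, ‖G k ω‖^2 ∂μ =
        (∫ ω, ‖gradient f (x k ω)‖^2 ∂μ)
          + ∫ ω, ‖G k ω - gradient f (x k ω)‖^2 ∂μ := by
      have hptG : ∀ ω, ‖G k ω‖^2 = ‖gradient f (x k ω)‖^2
          + 2 * ⟪gradient f (x k ω), G k ω - gradient f (x k ω)⟫
          + ‖G k ω - gradient f (x k ω)‖^2 := by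
        intro ω
        rw [show G k ω = gradient f (x k ω) + (G k ω - gradient f (x k ω)) by abel]
        rw [norm_add_sq_real]
        ring_nf
        rw [show gradient f (x k ω) + (G k ω - gradient f (x k ω)) = G k ω by abel]
      rw [show (fun ω => ‖G k ω‖^2) = fun ω => ‖gradient f (x k ω)‖^2
          + 2 * ⟪gradient f (x k ω), G k ω - gradient f (x k ω)⟫
          + ‖G k ω - gradient f (x k ω)‖^2 from funext hptG]
      have j1 : Integrable (fun ω => ‖gradient f (x k ω)‖^2
          + 2 * ⟪gradient f (x k ω), G k ω - gradient f (x k ω)⟫) μ :=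
        intg2.add (intgY.const_mul 2)
      rw [integral_add j1 intY2, integral_add intg2 (intgY.const_mul 2),
        integral_const_mul, hortho2]
      ring
    have hgb : ∫ ω, ‖gradient f (x k ω)‖^2 ∂μ ≤
        2 * L * ∫ ω, (f (x k ω) - f xstar) ∂μ := by
      rw [← integral_const_mul]
      exact integral_mono intg2 (intfX.const_mul (2*L)) fun ω =>
        aux_gradsq f L hLpos hf hL xstar hmin (x k ω)
    have hYb : ∫ ω, ‖G k ω - gradient f (x k ω)‖^2 ∂μ ≤ d * σsq / b k := by
      rw [← integral_condExp (μ := μ)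
        (f := fun ω => ‖G k ω - gradient f (x k ω)‖^2) hm]
      calc ∫ ω, (μ[fun ω' => ‖G k ω' - gradient f (x k ω')‖^2|ℱ k]) ω ∂μ
          ≤ ∫ _ω, (d * σsq / b k : ℝ) ∂μ :=
            integral_mono_ae integrable_condExp (integrable_const _) (hGvar k)
        _ = d * σsq / b k := by simp
    linarith
  -- final arithmetic
  have haL : η k * L ≤ τ / 2 := by
    rw [le_div_iff₀ (by positivity : (0:ℝ) < 2*L)] at hηL
    nlinarith
  set F := ∫ ω, (f (x k ω) - f xstar) ∂μ with hFdef
  have h3 : η k * η k * L * F ≤ η k * (τ/2) * F := by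
    have := mul_le_mul_of_nonneg_right
      (mul_le_mul_of_nonneg_left haL ha.le) hF0
    calc η k * η k * L * F = η k * (η k * L) * F := by ring
      _ ≤ η k * (τ/2) * F := this
  have hc : η k^2/2 * (↑d * σsq / b k) = η k^2 * ↑d * σsq / (2 * b k) := by
    field_simp
  rw [hsplit]
  have h4 : - (η k) * (∫ ω, ⟪x k ω - xstar, G k ω⟫ ∂μ) ≤ - (η k) * (τ * F) := by
    have := mul_le_mul_of_nonneg_left hI1 ha.le
    linarith
  have h5 : η k^2/2 * (∫ ω, ‖G k ω‖^2 ∂μ) ≤ η k^2/2 * (2*L*F + ↑d * σsq / b k) :=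
    mul_le_mul_of_nonneg_left hI2 (by positivity)
  have h6 : η k^2/2 * (2*L*F + ↑d * σsq / b k) =
      η k * η k * L * F + η k^2 * ↑d * σsq / (2 * b k) := by
    rw [← hc]; ring
  nlinarith [h3, h4, h5, h6]
end

section
/- Under the SVRG setup, if 2L²h < μ then for every epoch j ≥ 0 the pivots satisfy E[‖x_j − x⋆‖²] ≤ ((1 + 2L²h²m) / (h m (μ − 2L²h)))^j · ‖x₀ − x⋆‖². -/
open MeasureTheory ProbabilityTheory
open scoped RealInnerProductSpace ENNReal

section SVRGAux

variable {Ω : Type*} {mΩ : MeasurableSpace Ω}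

private lemma svrg_indep_mono {μ : Measure Ω} {m₁ m₂ m₁' m₂' : MeasurableSpace Ω}
    (hi : Indep m₁ m₂ μ) (h1 : m₁' ≤ m₁) (h2 : m₂' ≤ m₂) : Indep m₁' m₂' μ := by
  rw [Indep_iff] at hi ⊢
  exact fun t1 t2 ht1 ht2 => hi t1 t2 (h1 _ ht1) (h2 _ ht2)

private lemma svrg_avg_integral {P : Measure Ω}
    [IsProbabilityMeasure P] {N : ℕ} {β : Type*} [MeasurableSpace β]
    (I : Ω → Fin N) (Z : Ω → β) (hI : Measurable I) (hZ : Measurable Z)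
    (hunif : ∀ a, P {ω | I ω = a} = (N : ℝ≥0∞)⁻¹)
    (hIF : IndepFun I Z P)
    (φ : Fin N → β → ℝ) (hφ : ∀ a, Measurable (φ a))
    (hint : ∀ a, Integrable (fun ω => φ a (Z ω)) P) :
    ∫ ω, φ (I ω) (Z ω) ∂P = (N : ℝ)⁻¹ * ∑ a, ∫ ω, φ a (Z ω) ∂P := by
  have hrep : ∀ ω, φ (I ω) (Z ω)
      = ∑ a, (if I ω = a then (1:ℝ) else 0) * φ a (Z ω) := by
    intro ω
    rw [Finset.sum_eq_single (I ω)]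
    · simp
    · intro b _ hb; simp [Ne.symm hb]
    · simp
  have hterm : ∀ a : Fin N, Integrable (fun ω => (if I ω = a then (1:ℝ) else 0) * φ a (Z ω)) P := by
    intro a
    exact (hint a).bdd_mul
      ((measurable_const.ite (hI (measurableSet_singleton a)) measurable_const).aestronglyMeasurable)
      (c := 1) (ae_of_all _ fun ω => by split <;> simp)
  calc ∫ ω, φ (I ω) (Z ω) ∂P
      = ∫ ω, ∑ a, (if I ω = a then (1:ℝ) else 0) * φ a (Z ω) ∂P := by
        simp_rw [hrep]
    _ = ∑ a, ∫ ω, (if I ω = a then (1:ℝ) else 0) * φ a (Z ω) ∂P :=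
        integral_finset_sum _ (fun a _ => hterm a)
    _ = ∑ a, (∫ ω, (if I ω = a then (1:ℝ) else 0) ∂P) * ∫ ω, φ a (Z ω) ∂P := by
        refine Finset.sum_congr rfl (fun a _ => ?_)
        have hcomp : IndepFun (fun ω => if I ω = a then (1:ℝ) else 0)
            (fun ω => φ a (Z ω)) P :=
          hIF.comp (Measurable.of_discrete (f := fun i : Fin N => if i = a then (1:ℝ) else 0))
            (hφ a)
        exact IndepFun.integral_fun_mul_eq_mul_integral hcomp
          ((measurable_const.ite (hI (measurableSet_singleton a)) measurable_const).aestronglyMeasurable)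
          ((hφ a).comp hZ).aestronglyMeasurable
    _ = ∑ a, (N : ℝ)⁻¹ * ∫ ω, φ a (Z ω) ∂P := by
        refine Finset.sum_congr rfl (fun a _ => ?_)
        congr 1
        have h1 : (fun ω => if I ω = a then (1:ℝ) else 0)
            = fun ω => Set.indicator (I ⁻¹' {a}) (fun _ => (1:ℝ)) ω := by
          funext ω
          by_cases hc : I ω = a <;> simp [Set.indicator_apply, Set.mem_preimage, hc]
        have h2 : P (I ⁻¹' {a}) = (N : ℝ≥0∞)⁻¹ := hunif a
        rw [h1, integral_indicator_const (1:ℝ) (hI (measurableSet_singleton a)), measureReal_def, h2]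
        simp [ENNReal.toReal_inv]
    _ = (N : ℝ)⁻¹ * ∑ a, ∫ ω, φ a (Z ω) ∂P := by rw [Finset.mul_sum]

private lemma svrg_integrable_inner {E : Type*} [NormedAddCommGroup E]
    [InnerProductSpace ℝ E] {P : Measure Ω} {f g : Ω → E}
    (hf : MemLp f 2 P) (hg : MemLp g 2 P) :
    Integrable (fun ω => ⟪f ω, g ω⟫) P := by
  have h1 := L2.integrable_inner (𝕜 := ℝ) (hf.toLp f) (hg.toLp g)
  refine h1.congr ?_
  filter_upwards [hf.coeFn_toLp, hg.coeFn_toLp] with ω h1 h2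
  rw [h1, h2]

private lemma svrg_variance_le {E : Type*} [NormedAddCommGroup E] [InnerProductSpace ℝ E]
    {N : ℕ} (hN : 0 < N) (X : Fin N → E) :
    (N:ℝ)⁻¹ * ∑ a, ‖X a - (N:ℝ)⁻¹ • ∑ b, X b‖^2 ≤ (N:ℝ)⁻¹ * ∑ a, ‖X a‖^2 := by
  have hN0 : (N:ℝ) ≠ 0 := Nat.cast_ne_zero.mpr hN.ne'
  set Xbar := (N:ℝ)⁻¹ • ∑ b, X b with hXbar
  have hsum : ∑ b, X b = (N:ℝ) • Xbar := by
    rw [hXbar, smul_smul, mul_inv_cancel₀ hN0, one_smul]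
  have hinner : ∑ a, (2 * ⟪X a, Xbar⟫) = 2 * ((N:ℝ) * ‖Xbar‖^2) := by
    rw [← Finset.mul_sum, ← sum_inner, hsum, real_inner_smul_left,
      real_inner_self_eq_norm_sq]
  have hexp : ∑ a, ‖X a - Xbar‖^2
      = (∑ a, ‖X a‖^2) - (N:ℝ) * ‖Xbar‖^2 := by
    have h1 : ∀ a, ‖X a - Xbar‖^2 = ‖X a‖^2 - 2 * ⟪X a, Xbar⟫ + ‖Xbar‖^2 :=
      fun a => norm_sub_sq_real _ _
    simp_rw [h1]
    rw [Finset.sum_add_distrib, Finset.sum_sub_distrib, hinner, Finset.sum_const,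
      Finset.card_univ, Fintype.card_fin, nsmul_eq_mul]
    ring
  rw [hexp]
  have h3 : 0 ≤ (N:ℝ) * ‖Xbar‖^2 := by positivity
  have h2 : 0 ≤ (N:ℝ)⁻¹ := by positivity
  nlinarith [mul_le_mul_of_nonneg_left (sub_le_self (∑ a, ‖X a‖^2) h3) h2]

private lemma svrg_ptbound {E : Type*} [NormedAddCommGroup E] [InnerProductSpace ℝ E]
    {N : ℕ} (hN : 0 < N) (g : Fin N → E → E) (gf : E → E) (L : ℝ) (xstar : E)
    (havg : ∀ z, gf z = (N:ℝ)⁻¹ • ∑ a, g a z)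
    (hLip : ∀ a, ∀ z w : E, ‖g a z - g a w‖ ≤ L * ‖z - w‖)
    (hstar : gf xstar = 0) (u w : E) :
    (N:ℝ)⁻¹ * ∑ a, ‖g a u - g a w + gf w‖^2
      ≤ 2*L^2*‖u - xstar‖^2 + 2*L^2*‖w - xstar‖^2 := by
  have hN0 : (N:ℝ) ≠ 0 := Nat.cast_ne_zero.mpr hN.ne'
  have hNinv : 0 ≤ (N:ℝ)⁻¹ := by positivity
  set X : Fin N → E := fun a => g a w - g a xstar with hX
  have hXbar : (N:ℝ)⁻¹ • ∑ b, X b = gf w := by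
    rw [hX]
    simp only [Finset.sum_sub_distrib, smul_sub, ← havg, hstar, sub_zero]
  have hdecomp : ∀ a, g a u - g a w + gf w
      = (g a u - g a xstar) - (X a - (N:ℝ)⁻¹ • ∑ b, X b) := by
    intro a; rw [hXbar]; show _ = (g a u - g a xstar) - ((g a w - g a xstar) - gf w); abel
  have hterm : ∀ a, ‖g a u - g a w + gf w‖^2
      ≤ 2*‖g a u - g a xstar‖^2 + 2*‖X a - (N:ℝ)⁻¹ • ∑ b, X b‖^2 := by
    intro a
    rw [hdecomp a]
    have h1 := norm_sub_le (g a u - g a xstar) (X a - (N:ℝ)⁻¹ • ∑ b, X b)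
    nlinarith [norm_nonneg (g a u - g a xstar), norm_nonneg (X a - (N:ℝ)⁻¹ • ∑ b, X b),
      sq_nonneg (‖g a u - g a xstar‖ - ‖X a - (N:ℝ)⁻¹ • ∑ b, X b‖),
      norm_nonneg ((g a u - g a xstar) - (X a - (N:ℝ)⁻¹ • ∑ b, X b))]
  have hsum1 : (N:ℝ)⁻¹ * ∑ a, ‖g a u - g a xstar‖^2 ≤ L^2 * ‖u - xstar‖^2 := by
    have hb : ∀ a : Fin N, ‖g a u - g a xstar‖^2 ≤ L^2 * ‖u - xstar‖^2 := by
      intro a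
      have := hLip a u xstar
      nlinarith [norm_nonneg (g a u - g a xstar)]
    calc (N:ℝ)⁻¹ * ∑ a, ‖g a u - g a xstar‖^2
        ≤ (N:ℝ)⁻¹ * ∑ _a : Fin N, L^2 * ‖u - xstar‖^2 :=
          mul_le_mul_of_nonneg_left (Finset.sum_le_sum (fun a _ => hb a)) hNinv
      _ = L^2 * ‖u - xstar‖^2 := by
          rw [Finset.sum_const, Finset.card_univ, Fintype.card_fin, nsmul_eq_mul]
          field_simp
  have hsum2 : (N:ℝ)⁻¹ * ∑ a, ‖X a‖^2 ≤ L^2 * ‖w - xstar‖^2 := by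
    have hb : ∀ a : Fin N, ‖X a‖^2 ≤ L^2 * ‖w - xstar‖^2 := by
      intro a
      have := hLip a w xstar
      nlinarith [norm_nonneg (X a)]
    calc (N:ℝ)⁻¹ * ∑ a, ‖X a‖^2
        ≤ (N:ℝ)⁻¹ * ∑ _a : Fin N, L^2 * ‖w - xstar‖^2 :=
          mul_le_mul_of_nonneg_left (Finset.sum_le_sum (fun a _ => hb a)) hNinv
      _ = L^2 * ‖w - xstar‖^2 := by
          rw [Finset.sum_const, Finset.card_univ, Fintype.card_fin, nsmul_eq_mul]
          field_simp
  have hvar := svrg_variance_le hN X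
  calc (N:ℝ)⁻¹ * ∑ a, ‖g a u - g a w + gf w‖^2
      ≤ (N:ℝ)⁻¹ * ∑ a, (2*‖g a u - g a xstar‖^2 + 2*‖X a - (N:ℝ)⁻¹ • ∑ b, X b‖^2) :=
        mul_le_mul_of_nonneg_left (Finset.sum_le_sum (fun a _ => hterm a)) hNinv
    _ = 2*((N:ℝ)⁻¹ * ∑ a, ‖g a u - g a xstar‖^2)
        + 2*((N:ℝ)⁻¹ * ∑ a, ‖X a - (N:ℝ)⁻¹ • ∑ b, X b‖^2) := by
        rw [Finset.sum_add_distrib, ← Finset.mul_sum, ← Finset.mul_sum]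
        ring
    _ ≤ 2*(L^2 * ‖u - xstar‖^2) + 2*((N:ℝ)⁻¹ * ∑ a, ‖X a‖^2) := by linarith
    _ ≤ 2*(L^2 * ‖u - xstar‖^2) + 2*(L^2 * ‖w - xstar‖^2) := by linarith
    _ = 2*L^2*‖u - xstar‖^2 + 2*L^2*‖w - xstar‖^2 := by ring

end SVRGAux

set_option maxHeartbeats 1600000 in
/-- **Linear convergence of SVRG (Option II) under the restricted secant inequality.**
If `2L²h < μ` then for every epoch `j`, the pivots satisfy
`E[‖x_j − x⋆‖²] ≤ ((1 + 2L²h²m)/(h m (μ − 2L²h)))^j ‖x₀ − x⋆‖²`. -/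
theorem svrg_linear_convergence
    {Ω : Type*} {m0 : MeasurableSpace Ω} {P : Measure Ω} [IsProbabilityMeasure P]
    {d N : ℕ} (hN : 0 < N)
    (fs : Fin N → EuclideanSpace ℝ (Fin d) → ℝ) (L : ℝ)
    (hfs : ∀ i, ContDiff ℝ 1 (fs i))
    (hLs : ∀ i, ∀ x y : EuclideanSpace ℝ (Fin d),
      ‖gradient (fs i) x - gradient (fs i) y‖ ≤ L * ‖x - y‖)
    (f : EuclideanSpace ℝ (Fin d) → ℝ)
    (hfdef : ∀ z, f z = (1 / (N : ℝ)) * ∑ i, fs i z)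
    (μ : ℝ) (hμ : 0 < μ)
    (xstar : EuclideanSpace ℝ (Fin d)) (hmin : ∀ z, f xstar ≤ f z)
    (hgradstar : gradient f xstar = 0)
    (hrsi : ∀ z : EuclideanSpace ℝ (Fin d), μ / 2 * ‖z - xstar‖ ^ 2 ≤ ⟪gradient f z, z - xstar⟫)
    (m : ℕ) (hm : 1 ≤ m) (h : ℝ) (hh : 0 < h)
    (x : ℕ → Ω → EuclideanSpace ℝ (Fin d))
    (y : ℕ → ℕ → Ω → EuclideanSpace ℝ (Fin d))
    (idx : ℕ → ℕ → Ω → Fin N)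
    (x0 : EuclideanSpace ℝ (Fin d)) (hx0 : x 0 = fun _ => x0)
    (hmeas_x : ∀ j, Measurable (x j))
    (hmeas_y : ∀ j k, Measurable (y j k))
    (hmeas_idx : ∀ j k, Measurable (idx j k))
    (hL2x : ∀ j, MemLp (x j) 2 P)
    (hL2y : ∀ j k, MemLp (y j k) 2 P)
    (hy0 : ∀ j, y j 0 = x j)
    (hupdate : ∀ j k, k < m → ∀ ω, y j (k + 1) ω =
      y j k ω - h • (gradient (fs (idx j k ω)) (y j k ω)
        - gradient (fs (idx j k ω)) (x j ω) + gradient f (x j ω)))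
    (hunif : ∀ j k, ∀ a : Fin N, P {ω | idx j k ω = a} = (N : ℝ≥0∞)⁻¹)
    (hindep : ∀ j k, Indep
      (MeasurableSpace.comap (idx j k) ⊤)
      (MeasurableSpace.comap (x j) (borel (EuclideanSpace ℝ (Fin d))) ⊔
        ⨆ (p : ℕ × ℕ) (_ : p.1 < j ∨ (p.1 = j ∧ p.2 < k)),
          MeasurableSpace.comap (idx p.1 p.2) ⊤) P)
    (hjump : ∀ j, ∫ ω, ‖x (j + 1) ω - xstar‖ ^ 2 ∂P =
      (1 / (m : ℝ)) * ∑ k ∈ Finset.range m, ∫ ω, ‖y j k ω - xstar‖ ^ 2 ∂P)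
    (hstep : 2 * L ^ 2 * h < μ) :
    ∀ j : ℕ, ∫ ω, ‖x j ω - xstar‖ ^ 2 ∂P ≤
      ((1 + 2 * L ^ 2 * h ^ 2 * m) / (h * m * (μ - 2 * L ^ 2 * h))) ^ j *
        ‖x0 - xstar‖ ^ 2 := by
  have hN0 : (N:ℝ) ≠ 0 := Nat.cast_ne_zero.mpr hN.ne'
  have hNinv : (0:ℝ) ≤ (N:ℝ)⁻¹ := by positivity
  have hm0 : (0:ℝ) < (m:ℝ) := by exact_mod_cast hm
  have hgap : (0:ℝ) < μ - 2 * L ^ 2 * h := sub_pos.mpr hstep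
  -- gradient of the average
  have hgrad_avg : ∀ z, gradient f z = (N:ℝ)⁻¹ • ∑ i, gradient (fs i) z := by
    intro z
    have hdf : ∀ i, DifferentiableAt ℝ (fs i) z :=
      fun i => ((hfs i).differentiable one_ne_zero).differentiableAt
    have hsum : DifferentiableAt ℝ (fun w => ∑ i, fs i w) z :=
      DifferentiableAt.fun_sum (fun i _ => hdf i)
    have hfd : fderiv ℝ f z = (1 / (N:ℝ)) • ∑ i, fderiv ℝ (fs i) z := by
      have hfeq : f = fun w => (1 / (N : ℝ)) * ∑ i, fs i w := funext hfdef
      rw [hfeq, fderiv_const_mul hsum, fderiv_fun_sum (fun i _ => hdf i)]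
    rw [gradient, hfd, _root_.map_smul, _root_.map_sum, one_div]
    rfl
  have hgcont : ∀ i, Continuous (gradient (fs i)) := by
    intro i
    have h1 : Continuous (fderiv ℝ (fs i)) := (hfs i).continuous_fderiv one_ne_zero
    exact ((InnerProductSpace.toDual ℝ _).symm.continuous).comp h1
  have hgfcont : Continuous (gradient f) := by
    have hfeq : gradient f = fun z => (N:ℝ)⁻¹ • ∑ i, gradient (fs i) z := funext hgrad_avg
    rw [hfeq]
    exact (continuous_const : Continuous fun _ : EuclideanSpace ℝ (Fin d) => (N:ℝ)⁻¹).smul (continuous_finset_sum _ fun i _ => hgcont i)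
  have hgfLip : ∀ z w : EuclideanSpace ℝ (Fin d),
      ‖gradient f z - gradient f w‖ ≤ L * ‖z - w‖ := by
    intro z w
    rw [hgrad_avg z, hgrad_avg w, ← smul_sub, ← Finset.sum_sub_distrib]
    calc ‖(N:ℝ)⁻¹ • ∑ i, (gradient (fs i) z - gradient (fs i) w)‖
        = (N:ℝ)⁻¹ * ‖∑ i, (gradient (fs i) z - gradient (fs i) w)‖ := by
          rw [norm_smul, Real.norm_eq_abs, abs_of_nonneg hNinv]
      _ ≤ (N:ℝ)⁻¹ * ∑ i, ‖gradient (fs i) z - gradient (fs i) w‖ :=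
          mul_le_mul_of_nonneg_left (norm_sum_le _ _) hNinv
      _ ≤ (N:ℝ)⁻¹ * ∑ _i : Fin N, (L * ‖z - w‖) :=
          mul_le_mul_of_nonneg_left (Finset.sum_le_sum fun i _ => hLs i z w) hNinv
      _ = L * ‖z - w‖ := by
          rw [Finset.sum_const, Finset.card_univ, Fintype.card_fin, nsmul_eq_mul]
          field_simp
  have hBor : borel (EuclideanSpace ℝ (Fin d))
      = (inferInstance : MeasurableSpace (EuclideanSpace ℝ (Fin d))) :=
    BorelSpace.measurable_eq.symm
  -- the average identity for the SVRG direction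
  have havgV : ∀ u w : EuclideanSpace ℝ (Fin d),
      (N:ℝ)⁻¹ • ∑ a, (gradient (fs a) u - gradient (fs a) w + gradient f w)
        = gradient f u := by
    intro u w
    rw [Finset.sum_add_distrib, Finset.sum_sub_distrib, Finset.sum_const,
      Finset.card_univ, Fintype.card_fin, smul_add, smul_sub, ← hgrad_avg, ← hgrad_avg]
    have hns : (N:ℝ)⁻¹ • (N • gradient f w) = gradient f w := by
      rw [← Nat.cast_smul_eq_nsmul ℝ, smul_smul, inv_mul_cancel₀ hN0, one_smul]
    rw [hns]
    abel
  set ρ := (1 + 2 * L ^ 2 * h ^ 2 * m) / (h * m * (μ - 2 * L ^ 2 * h)) with hρ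
  have hden : (0:ℝ) < h * m * (μ - 2 * L ^ 2 * h) := by positivity
  have hρ0 : 0 ≤ ρ := div_nonneg (by positivity) hden.le
  -- the per-epoch contraction
  have hepoch : ∀ j, ∫ ω, ‖x (j+1) ω - xstar‖^2 ∂P
      ≤ ρ * ∫ ω, ‖x j ω - xstar‖^2 ∂P := by
    intro j
    have hj := hjump j
    set D := ∫ ω, ‖x j ω - xstar‖^2 ∂P with hD
    set a : ℕ → ℝ := fun k => ∫ ω, ‖y j k ω - xstar‖^2 ∂P with ha
    have hD0 : 0 ≤ D := integral_nonneg (fun ω => by positivity)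
    have ha0 : ∀ k, 0 ≤ a k := fun k => integral_nonneg (fun ω => by positivity)
    have haD : a 0 = D := by rw [ha, hD]; simp only [hy0 j]
    -- σ-algebra filtration facts
    set G : ℕ → MeasurableSpace Ω := fun k =>
      MeasurableSpace.comap (x j) (borel (EuclideanSpace ℝ (Fin d))) ⊔
        ⨆ (p : ℕ × ℕ) (_ : p.1 < j ∨ (p.1 = j ∧ p.2 < k)),
          MeasurableSpace.comap (idx p.1 p.2) ⊤ with hG
    have hGmono : ∀ {k k' : ℕ}, k ≤ k' → G k ≤ G k' := by
      intro k k' hkk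
      refine sup_le_sup_left ?_ _
      refine iSup_le fun p => iSup_le fun hp => ?_
      refine le_iSup_of_le p (le_iSup_of_le ?_ le_rfl)
      rcases hp with hp | ⟨h1, h2⟩
      · exact Or.inl hp
      · exact Or.inr ⟨h1, lt_of_lt_of_le h2 hkk⟩
    have hxG : ∀ k, Measurable[G k] (x j) := by
      intro k
      rw [measurable_iff_comap_le]
      have h1 : MeasurableSpace.comap (x j) (borel (EuclideanSpace ℝ (Fin d))) ≤ G k :=
        le_sup_left
      rw [hBor] at h1
      exact h1
    have hidxG : ∀ l k : ℕ, l < k → Measurable[G k] (idx j l) := by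
      intro l k hlk
      rw [measurable_iff_comap_le]
      refine le_trans (MeasurableSpace.comap_mono le_top) (le_trans ?_ le_sup_right)
      exact le_iSup_of_le (j, l) (le_iSup_of_le (Or.inr ⟨rfl, hlk⟩) le_rfl)
    have hyG : ∀ k, k ≤ m → Measurable[G k] (y j k) := by
      intro k
      induction k with
      | zero => intro _; rw [hy0 j]; exact hxG 0
      | succ k ih =>
        intro hk1
        have hkm : k < m := hk1
        have hyk : Measurable[G (k+1)] (y j k) :=
          (ih hkm.le).mono (hGmono (Nat.le_succ k)) le_rfl
        have hxk : Measurable[G (k+1)] (x j) := hxG (k+1)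
        have hik : Measurable[G (k+1)] (idx j k) := hidxG k (k+1) (Nat.lt_succ_self k)
        have hrep : y j (k+1) = fun ω => y j k ω - h • (∑ b, if idx j k ω = b
            then gradient (fs b) (y j k ω) - gradient (fs b) (x j ω)
              + gradient f (x j ω) else 0) := by
          funext ω
          rw [hupdate j k hkm ω]
          congr 2
          rw [Finset.sum_eq_single (idx j k ω)]
          · simp
          · intro b _ hb; simp [Ne.symm hb]
          · simp
        rw [hrep]
        refine Measurable.sub hyk ?_
        refine Measurable.const_smul ?_ h
        refine Finset.measurable_sum _ (fun b _ => ?_)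
        refine Measurable.ite (hik (measurableSet_singleton b)) ?_ measurable_const
        exact (((hgcont b).measurable.comp hyk).sub
          ((hgcont b).measurable.comp hxk)).add (hgfcont.measurable.comp hxk)
    -- key one-step inequality
    have hDint : Integrable (fun ω => ‖x j ω - xstar‖^2) P := by
      refine (memLp_two_iff_integrable_sq_norm ?_).mp ((hL2x j).sub (memLp_const xstar))
      exact ((hmeas_x j).sub measurable_const).aestronglyMeasurable
    have key : ∀ k, k < m → a (k+1)
        ≤ (1 - h * (μ - 2 * L ^ 2 * h)) * a k + 2 * L ^ 2 * h ^ 2 * D := by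
      intro k hk
      have hYm : MemLp (fun ω => y j k ω - xstar) 2 P := (hL2y j k).sub (memLp_const xstar)
      have hXm : MemLp (fun ω => x j ω - xstar) 2 P := (hL2x j).sub (memLp_const xstar)
      have hW : MemLp (fun ω => L * ‖y j k ω - xstar‖ + 2 * L * ‖x j ω - xstar‖) 2 P :=
        (hYm.norm.const_mul L).add (hXm.norm.const_mul (2 * L))
      set Va : Fin N → Ω → EuclideanSpace ℝ (Fin d) := fun b ω =>
        gradient (fs b) (y j k ω) - gradient (fs b) (x j ω) + gradient f (x j ω) with hVa
      have hVabd : ∀ b ω, ‖Va b ω‖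
          ≤ L * ‖y j k ω - xstar‖ + 2 * L * ‖x j ω - xstar‖ := by
        intro b ω
        have hre : Va b ω = (gradient (fs b) (y j k ω) - gradient (fs b) xstar)
            + (gradient (fs b) xstar - gradient (fs b) (x j ω))
            + (gradient f (x j ω) - gradient f xstar) := by
          rw [hgradstar]; simp only [hVa]; abel
        rw [hre]
        refine le_trans (norm_add₃_le) ?_
        have e1 := hLs b (y j k ω) xstar
        have e2 := hLs b xstar (x j ω)
        have e3 := hgfLip (x j ω) xstar
        rw [norm_sub_rev xstar (x j ω)] at e2
        linarith
      have hVaMeas : ∀ b, Measurable (Va b) := fun b =>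
        (((hgcont b).measurable.comp (hmeas_y j k)).sub
          ((hgcont b).measurable.comp (hmeas_x j))).add
          (hgfcont.measurable.comp (hmeas_x j))
      have hVaL2 : ∀ b, MemLp (Va b) 2 P := by
        intro b
        refine hW.of_le (hVaMeas b).aestronglyMeasurable (ae_of_all _ fun ω => ?_)
        rw [Real.norm_eq_abs]
        exact (hVabd b ω).trans (le_abs_self _)
      have hint1 : ∀ b, Integrable (fun ω => ⟪Va b ω, y j k ω - xstar⟫) P :=
        fun b => svrg_integrable_inner (hVaL2 b) hYm
      have hint2 : ∀ b, Integrable (fun ω => ‖Va b ω‖^2) P := fun b =>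
        (memLp_two_iff_integrable_sq_norm (hVaMeas b).aestronglyMeasurable).mp (hVaL2 b)
      set V : Ω → EuclideanSpace ℝ (Fin d) := fun ω =>
        gradient (fs (idx j k ω)) (y j k ω) - gradient (fs (idx j k ω)) (x j ω)
          + gradient f (x j ω) with hV
      have hVrep : ∀ ω, V ω = ∑ b, if idx j k ω = b then Va b ω else 0 := by
        intro ω
        rw [Finset.sum_eq_single (idx j k ω)]
        · simp; rfl
        · intro b _ hb; simp [Ne.symm hb]
        · simp
      have hVmeas : Measurable V := by
        rw [show V = fun ω => ∑ b, if idx j k ω = b then Va b ω else 0 from funext hVrep]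
        exact Finset.measurable_sum _ fun b _ =>
          Measurable.ite ((hmeas_idx j k) (measurableSet_singleton b)) (hVaMeas b)
            measurable_const
      have hVL2 : MemLp V 2 P := by
        refine hW.of_le hVmeas.aestronglyMeasurable (ae_of_all _ fun ω => ?_)
        rw [Real.norm_eq_abs]
        exact (hVabd (idx j k ω) ω).trans (le_abs_self _)
      have hAint : Integrable (fun ω => ‖y j k ω - xstar‖^2) P :=
        (memLp_two_iff_integrable_sq_norm
          ((hmeas_y j k).sub measurable_const).aestronglyMeasurable).mp hYm
      have hBint : Integrable (fun ω => ⟪V ω, y j k ω - xstar⟫) P :=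
        svrg_integrable_inner hVL2 hYm
      have hCint : Integrable (fun ω => ‖V ω‖^2) P :=
        (memLp_two_iff_integrable_sq_norm hVmeas.aestronglyMeasurable).mp hVL2
      -- pointwise expansion of the update
      have hexp : ∀ ω, ‖y j (k+1) ω - xstar‖^2
          = ‖y j k ω - xstar‖^2 - 2*h*⟪V ω, y j k ω - xstar⟫ + h^2*‖V ω‖^2 := by
        intro ω
        rw [hupdate j k hk ω]
        have hre : y j k ω - h • V ω - xstar = (y j k ω - xstar) - h • V ω := by
          rw [hV]; abel
        rw [show y j k ω - h • (gradient (fs (idx j k ω)) (y j k ω)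
            - gradient (fs (idx j k ω)) (x j ω) + gradient f (x j ω)) - xstar
            = (y j k ω - xstar) - h • V ω from hre]
        rw [norm_sub_sq_real, real_inner_smul_right, real_inner_comm, norm_smul,
          Real.norm_eq_abs, mul_pow, sq_abs]
        ring
      have hsplit : a (k+1) = a k - 2*h*(∫ ω, ⟪V ω, y j k ω - xstar⟫ ∂P)
          + h^2*(∫ ω, ‖V ω‖^2 ∂P) := by
        have h1 : a (k+1) = ∫ ω, (‖y j k ω - xstar‖^2
            - 2*h*⟪V ω, y j k ω - xstar⟫ + h^2*‖V ω‖^2) ∂P := by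
          rw [ha]
          exact integral_congr_ae (ae_of_all _ hexp)
        have hB2 : Integrable (fun ω => 2*h*⟪V ω, y j k ω - xstar⟫) P :=
          hBint.const_mul (2*h)
        have hC2 : Integrable (fun ω => h^2*‖V ω‖^2) P := hCint.const_mul (h^2)
        have hAB : Integrable
            (fun ω => ‖y j k ω - xstar‖^2 - 2*h*⟪V ω, y j k ω - xstar⟫) P :=
          hAint.sub hB2
        rw [h1, integral_add hAB hC2, integral_sub hAint hB2,
          integral_const_mul, integral_const_mul]
      -- independence
      set Z : Ω → EuclideanSpace ℝ (Fin d) × EuclideanSpace ℝ (Fin d) :=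
        fun ω => (y j k ω, x j ω) with hZ
      have hZmeas : Measurable Z := (hmeas_y j k).prodMk (hmeas_x j)
      have hZG : Measurable[G k] Z := (hyG k hk.le).prodMk (hxG k)
      have hIF : IndepFun (idx j k) Z P := by
        rw [IndepFun_iff_Indep]
        exact svrg_indep_mono (hindep j k) (MeasurableSpace.comap_mono le_top)
          (measurable_iff_comap_le.mp hZG)
      -- reduction of the inner-product term
      have hI1 : ∫ ω, ⟪V ω, y j k ω - xstar⟫ ∂P
          = ∫ ω, ⟪gradient f (y j k ω), y j k ω - xstar⟫ ∂P := by
        have hred := svrg_avg_integral (idx j k) Z (hmeas_idx j k) hZmeas (hunif j k) hIF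
          (fun b p => ⟪gradient (fs b) p.1 - gradient (fs b) p.2 + gradient f p.2,
            p.1 - xstar⟫)
          (fun b => ((((hgcont b).comp continuous_fst).sub
            ((hgcont b).comp continuous_snd)).add
            (hgfcont.comp continuous_snd)).inner
            (continuous_fst.sub continuous_const) |>.measurable)
          (fun b => hint1 b)
        calc ∫ ω, ⟪V ω, y j k ω - xstar⟫ ∂P
            = (N:ℝ)⁻¹ * ∑ b, ∫ ω, ⟪Va b ω, y j k ω - xstar⟫ ∂P := hred
          _ = (N:ℝ)⁻¹ * ∫ ω, ∑ b, ⟪Va b ω, y j k ω - xstar⟫ ∂P := by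
              rw [← integral_finset_sum _ (fun b _ => hint1 b)]
          _ = ∫ ω, (N:ℝ)⁻¹ * ∑ b, ⟪Va b ω, y j k ω - xstar⟫ ∂P := by
              rw [integral_const_mul]
          _ = ∫ ω, ⟪gradient f (y j k ω), y j k ω - xstar⟫ ∂P := by
              refine integral_congr_ae (ae_of_all _ fun ω => ?_)
              simp only [hVa]
              rw [← sum_inner (𝕜 := ℝ), ← real_inner_smul_left, havgV (y j k ω) (x j ω)]
      have hGfY : MemLp (fun ω => gradient f (y j k ω)) 2 P := by
        refine (hYm.norm.const_mul L).of_le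
          (hgfcont.measurable.comp (hmeas_y j k)).aestronglyMeasurable
          (ae_of_all _ fun ω => ?_)
        rw [Real.norm_eq_abs]
        refine le_trans ?_ (le_abs_self _)
        have := hgfLip (y j k ω) xstar
        rw [hgradstar, sub_zero] at this
        exact this
      have hI1ge : μ/2 * a k ≤ ∫ ω, ⟪V ω, y j k ω - xstar⟫ ∂P := by
        rw [hI1, ha, ← integral_const_mul]
        exact integral_mono (hAint.const_mul _) (svrg_integrable_inner hGfY hYm)
          (fun ω => hrsi (y j k ω))
      -- reduction of the squared-norm term
      have hI2 : ∫ ω, ‖V ω‖^2 ∂P = (N:ℝ)⁻¹ * ∑ b, ∫ ω, ‖Va b ω‖^2 ∂P := by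
        exact svrg_avg_integral (idx j k) Z (hmeas_idx j k) hZmeas (hunif j k) hIF
          (fun b p => ‖gradient (fs b) p.1 - gradient (fs b) p.2 + gradient f p.2‖^2)
          (fun b => (((((hgcont b).comp continuous_fst).sub
            ((hgcont b).comp continuous_snd)).add
            (hgfcont.comp continuous_snd)).norm.pow 2).measurable)
          (fun b => hint2 b)
      have hI2le : ∫ ω, ‖V ω‖^2 ∂P ≤ 2*L^2 * a k + 2*L^2 * D := by
        rw [hI2]
        calc (N:ℝ)⁻¹ * ∑ b, ∫ ω, ‖Va b ω‖^2 ∂P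
            = ∫ ω, (N:ℝ)⁻¹ * ∑ b, ‖Va b ω‖^2 ∂P := by
              rw [← integral_finset_sum _ (fun b _ => hint2 b), integral_const_mul]
          _ ≤ ∫ ω, (2*L^2*‖y j k ω - xstar‖^2 + 2*L^2*‖x j ω - xstar‖^2) ∂P := by
              refine integral_mono
                ((integrable_finset_sum _ (fun b _ => hint2 b)).const_mul _)
                ((hAint.const_mul _).add (hDint.const_mul _)) (fun ω => ?_)
              exact svrg_ptbound hN (fun b => gradient (fs b)) (gradient f) L xstar
                hgrad_avg hLs hgradstar (y j k ω) (x j ω)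
          _ = 2*L^2 * a k + 2*L^2 * D := by
              rw [integral_add (hAint.const_mul _) (hDint.const_mul _),
                integral_const_mul, integral_const_mul, ha, hD]
      -- combine
      have h2h : (0:ℝ) ≤ 2*h := by positivity
      have hh2 : (0:ℝ) ≤ h^2 := by positivity
      have e1 := mul_le_mul_of_nonneg_left hI1ge h2h
      have e2 := mul_le_mul_of_nonneg_left hI2le hh2
      rw [hsplit]
      nlinarith [e1, e2]
    -- telescoping over the epoch
    set c1 := h * (μ - 2 * L ^ 2 * h) with hc1
    have hc1pos : 0 < c1 := by positivity
    set c2 := 2 * L ^ 2 * h ^ 2 with hc2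
    have hc20 : 0 ≤ c2 := by positivity
    have hstep' : ∀ k ∈ Finset.range m, c1 * a k ≤ (a k - a (k+1)) + c2 * D := by
      intro k hkr
      have hk := Finset.mem_range.mp hkr
      have hkey := key k hk
      linarith [hkey]
    have htele : c1 * ∑ k ∈ Finset.range m, a k ≤ (1 + c2 * m) * D := by
      calc c1 * ∑ k ∈ Finset.range m, a k
          = ∑ k ∈ Finset.range m, c1 * a k := Finset.mul_sum _ _ _
        _ ≤ ∑ k ∈ Finset.range m, ((a k - a (k+1)) + c2 * D) :=
            Finset.sum_le_sum hstep'
        _ = (a 0 - a m) + m * (c2 * D) := by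
            rw [Finset.sum_add_distrib, Finset.sum_range_sub' a m, Finset.sum_const,
              Finset.card_range, nsmul_eq_mul]
        _ ≤ D + m * (c2 * D) := by
            have h1 := ha0 m
            have h2 := haD
            linarith
        _ = (1 + c2 * m) * D := by ring
    have hsumnn : 0 ≤ ∑ k ∈ Finset.range m, a k :=
      Finset.sum_nonneg (fun k _ => ha0 k)
    rw [hj]
    have hsle : ∑ k ∈ Finset.range m, a k ≤ (1 + c2 * m) * D / c1 :=
      (le_div_iff₀ hc1pos).mpr (by linarith [htele])
    calc (1 / (m:ℝ)) * ∑ k ∈ Finset.range m, a k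
        ≤ (1 / (m:ℝ)) * ((1 + c2 * m) * D / c1) :=
          mul_le_mul_of_nonneg_left hsle (by positivity)
      _ = ρ * D := by
          have hρ' : ρ = (1 + c2 * m) / (m * c1) := by
            rw [hρ, hc1]; ring
          rw [hρ']
          rw [div_mul_eq_mul_div, mul_div_assoc, div_mul_eq_mul_div, one_mul,
            div_div]
          ring_nf
  -- conclude by induction on epochs
  intro j
  induction j with
  | zero =>
    rw [hx0]
    simp
  | succ j ih =>
    calc ∫ ω, ‖x (j+1) ω - xstar‖^2 ∂P ≤ ρ * ∫ ω, ‖x j ω - xstar‖^2 ∂P := hepoch j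
      _ ≤ ρ * (ρ^j * ‖x0 - xstar‖^2) := mul_le_mul_of_nonneg_left ih hρ0
      _ = ρ^(j+1) * ‖x0 - xstar‖^2 := by ring
end

section
/- Let f₁, …, f_N : ℝ^d → ℝ each be differentiable and L-smooth, f = (1/N) Σ_{i=1}^N f_i, and x⋆ a point with ∇f(x⋆) = 0. Then for all x, y ∈ ℝ^d, the second moment of the SVRG estimator satisfies (1/N) Σ_{i=1}^N ‖∇f_i(x) − ∇f_i(y) + ∇f(y)‖² ≤ 2L² ‖x − x⋆‖² + 2L² ‖y − x⋆‖², and the same bound holds for (1/N) Σ_{i=1}^N ‖∇f_i(x) − ∇f_i(y) + ∇f(y) − ∇f(x)‖². -/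
open Finset

set_option maxHeartbeats 1000000 in
/-- Variance is at most the second moment. -/
lemma var_le_sm {E : Type*} [NormedAddCommGroup E] [InnerProductSpace ℝ E]
    {n : ℕ} (v : Fin n → E) (m : E) (hm : ∑ i, v i = (n : ℝ) • m) :
    ∑ i, ‖v i - m‖ ^ 2 ≤ ∑ i, ‖v i‖ ^ 2 := by
  have h : ∑ i, ‖v i - m‖ ^ 2
      = ∑ i, ‖v i‖ ^ 2 - 2 * inner ℝ (∑ i, v i) m + (n : ℝ) * ‖m‖ ^ 2 := by
    simp only [norm_sub_sq_real, Finset.sum_add_distrib, Finset.sum_sub_distrib,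
      ← Finset.sum_mul, ← inner_sum, Finset.sum_const, card_univ, Fintype.card_fin,
      nsmul_eq_mul, sum_inner]
    rw [← Finset.mul_sum]
  rw [h, hm]
  have : inner ℝ ((n : ℝ) • m) m = (n : ℝ) * ‖m‖ ^ 2 := by
    rw [real_inner_smul_left, real_inner_self_eq_norm_sq]
  rw [this]
  nlinarith [sq_nonneg ‖m‖, Nat.cast_nonneg (α := ℝ) n, mul_nonneg (Nat.cast_nonneg (α := ℝ) n) (sq_nonneg ‖m‖)]

lemma two_sq {E : Type*} [NormedAddCommGroup E] (u w : E) :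
    ‖u - w‖ ^ 2 ≤ 2 * ‖u‖ ^ 2 + 2 * ‖w‖ ^ 2 := by
  have h := norm_sub_le u w
  nlinarith [norm_nonneg u, norm_nonneg w, norm_nonneg (u - w), sq_nonneg (‖u‖ - ‖w‖)]

/-- **Second-moment bound for the SVRG gradient estimator under smoothness.** Let
`f = (1/N) Σᵢ fᵢ` with each `fᵢ` differentiable and `L`-smooth, and let `x⋆` satisfy
`∇f(x⋆) = 0`. Then for all `x, y`, the second moment of the SVRG estimator
`∇fᵢ(x) − ∇fᵢ(y) + ∇f(y)` satisfies
`(1/N) Σᵢ ‖∇fᵢ(x) − ∇fᵢ(y) + ∇f(y)‖² ≤ 2L²‖x − x⋆‖² + 2L²‖y − x⋆‖²`,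
and the same bound holds for `(1/N) Σᵢ ‖∇fᵢ(x) − ∇fᵢ(y) + ∇f(y) − ∇f(x)‖²`. -/
theorem svrg_estimator_second_moment_bound
    {d N : ℕ} (hN : 0 < N)
    (fs : Fin N → EuclideanSpace ℝ (Fin d) → ℝ) (L : ℝ)
    (hdiff : ∀ i, Differentiable ℝ (fs i))
    (hLs : ∀ i, ∀ x y : EuclideanSpace ℝ (Fin d),
      ‖gradient (fs i) x - gradient (fs i) y‖ ≤ L * ‖x - y‖)
    (f : EuclideanSpace ℝ (Fin d) → ℝ)
    (hf : ∀ z, f z = (1 / (N : ℝ)) * ∑ i, fs i z)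
    (xstar : EuclideanSpace ℝ (Fin d)) (hstar : gradient f xstar = 0)
    (x y : EuclideanSpace ℝ (Fin d)) :
    (1 / (N : ℝ)) * ∑ i, ‖gradient (fs i) x - gradient (fs i) y + gradient f y‖ ^ 2 ≤
      2 * L ^ 2 * ‖x - xstar‖ ^ 2 + 2 * L ^ 2 * ‖y - xstar‖ ^ 2 ∧
    (1 / (N : ℝ)) *
        ∑ i, ‖gradient (fs i) x - gradient (fs i) y + gradient f y - gradient f x‖ ^ 2 ≤
      2 * L ^ 2 * ‖x - xstar‖ ^ 2 + 2 * L ^ 2 * ‖y - xstar‖ ^ 2 := by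
  have hNR : (0:ℝ) < (N:ℝ) := by exact_mod_cast hN
  have hNne : (N:ℝ) ≠ 0 := ne_of_gt hNR
  -- gradient of the average
  have key : ∀ z, gradient f z = (1/(N:ℝ)) • ∑ i, gradient (fs i) z := by
    intro z
    have hsum : HasFDerivAt (fun w => ∑ i, fs i w)
        (∑ i, InnerProductSpace.toDual ℝ _ (gradient (fs i) z)) z :=
      HasFDerivAt.fun_sum fun i _ => ((hdiff i z).hasGradientAt).hasFDerivAt
    have hfe : f = fun w => (1/(N:ℝ)) * ∑ i, fs i w := funext hf
    have hF : HasFDerivAt f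
        ((1/(N:ℝ)) • ∑ i, InnerProductSpace.toDual ℝ _ (gradient (fs i) z)) z := by
      rw [hfe]; exact hsum.const_mul _
    have h2 := hF.hasGradientAt
    rw [map_smul, map_sum] at h2
    simp only [LinearIsometryEquiv.symm_apply_apply] at h2
    exact h2.gradient
  set a : Fin N → EuclideanSpace ℝ (Fin d) :=
    fun i => gradient (fs i) x - gradient (fs i) xstar with ha
  set b : Fin N → EuclideanSpace ℝ (Fin d) :=
    fun i => gradient (fs i) y - gradient (fs i) xstar with hb
  set g : Fin N → EuclideanSpace ℝ (Fin d) :=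
    fun i => gradient (fs i) x - gradient (fs i) y + gradient f y with hg
  have hstar' : ∑ i, gradient (fs i) xstar = 0 := by
    have := key xstar
    rw [hstar] at this
    have := this.symm
    rcases smul_eq_zero.mp this with h | h
    · exact absurd h (one_div_ne_zero hNne)
    · exact h
  have hsum_of : ∀ z, ∑ i, gradient (fs i) z = (N:ℝ) • gradient f z := by
    intro z
    rw [key z, smul_smul]
    rw [mul_one_div, div_self hNne, one_smul]
  have hb_mean : ∑ i, b i = (N:ℝ) • gradient f y := by
    simp only [hb, Finset.sum_sub_distrib, hstar', sub_zero]
    exact hsum_of y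
  have hg_mean : ∑ i, g i = (N:ℝ) • gradient f x := by
    simp only [hg, Finset.sum_add_distrib, Finset.sum_sub_distrib, Finset.sum_const,
      Finset.card_univ, Fintype.card_fin, hsum_of x, hsum_of y, ← Nat.cast_smul_eq_nsmul ℝ]
    abel
  have hA : ∑ i, ‖a i‖ ^ 2 ≤ (N:ℝ) * (L ^ 2 * ‖x - xstar‖ ^ 2) := by
    calc ∑ i, ‖a i‖ ^ 2 ≤ ∑ _i : Fin N, (L * ‖x - xstar‖) ^ 2 := by
          apply Finset.sum_le_sum
          intro i _
          have := hLs i x xstar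
          nlinarith [norm_nonneg (a i), this]
      _ = (N:ℝ) * (L ^ 2 * ‖x - xstar‖ ^ 2) := by
          rw [Finset.sum_const, Finset.card_univ, Fintype.card_fin, nsmul_eq_mul]; ring
  have hB : ∑ i, ‖b i‖ ^ 2 ≤ (N:ℝ) * (L ^ 2 * ‖y - xstar‖ ^ 2) := by
    calc ∑ i, ‖b i‖ ^ 2 ≤ ∑ _i : Fin N, (L * ‖y - xstar‖) ^ 2 := by
          apply Finset.sum_le_sum
          intro i _
          have := hLs i y xstar
          nlinarith [norm_nonneg (b i), this]
      _ = (N:ℝ) * (L ^ 2 * ‖y - xstar‖ ^ 2) := by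
          rw [Finset.sum_const, Finset.card_univ, Fintype.card_fin, nsmul_eq_mul]; ring
  have hgi : ∀ i, g i = a i - (b i - gradient f y) := by
    intro i; simp only [hg, ha, hb]; abel
  have hmain : ∑ i, ‖g i‖ ^ 2 ≤
      (N:ℝ) * (2 * L ^ 2 * ‖x - xstar‖ ^ 2 + 2 * L ^ 2 * ‖y - xstar‖ ^ 2) := by
    have h1 : ∑ i, ‖g i‖ ^ 2 ≤ ∑ i, (2 * ‖a i‖ ^ 2 + 2 * ‖b i - gradient f y‖ ^ 2) := by
      apply Finset.sum_le_sum
      intro i _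
      rw [hgi i]
      exact two_sq _ _
    have h2 : ∑ i, ‖b i - gradient f y‖ ^ 2 ≤ ∑ i, ‖b i‖ ^ 2 :=
      var_le_sm b (gradient f y) hb_mean
    rw [Finset.sum_add_distrib, ← Finset.mul_sum, ← Finset.mul_sum] at h1
    have hring : (N:ℝ) * (2 * L ^ 2 * ‖x - xstar‖ ^ 2 + 2 * L ^ 2 * ‖y - xstar‖ ^ 2)
        = 2 * ((N:ℝ) * (L ^ 2 * ‖x - xstar‖ ^ 2)) + 2 * ((N:ℝ) * (L ^ 2 * ‖y - xstar‖ ^ 2)) := by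
      ring
    rw [hring]
    linarith
  constructor
  · rw [div_mul_eq_mul_div, div_le_iff₀ hNR]
    calc (1:ℝ) * ∑ i, ‖g i‖ ^ 2 = ∑ i, ‖g i‖ ^ 2 := one_mul _
      _ ≤ (N:ℝ) * (2 * L ^ 2 * ‖x - xstar‖ ^ 2 + 2 * L ^ 2 * ‖y - xstar‖ ^ 2) := hmain
      _ = (2 * L ^ 2 * ‖x - xstar‖ ^ 2 + 2 * L ^ 2 * ‖y - xstar‖ ^ 2) * (N:ℝ) := by ring
  · have hvar : ∑ i, ‖g i - gradient f x‖ ^ 2 ≤ ∑ i, ‖g i‖ ^ 2 :=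
      var_le_sm g (gradient f x) hg_mean
    rw [div_mul_eq_mul_div, div_le_iff₀ hNR]
    have : ∑ i, ‖gradient (fs i) x - gradient (fs i) y + gradient f y - gradient f x‖ ^ 2
        = ∑ i, ‖g i - gradient f x‖ ^ 2 := by
      apply Finset.sum_congr rfl
      intro i _
      simp only [hg]
    rw [this]
    calc (1:ℝ) * ∑ i, ‖g i - gradient f x‖ ^ 2 = ∑ i, ‖g i - gradient f x‖ ^ 2 := one_mul _
      _ ≤ ∑ i, ‖g i‖ ^ 2 := hvar
      _ ≤ (N:ℝ) * (2 * L ^ 2 * ‖x - xstar‖ ^ 2 + 2 * L ^ 2 * ‖y - xstar‖ ^ 2) := hmain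
      _ = (2 * L ^ 2 * ‖x - xstar‖ ^ 2 + 2 * L ^ 2 * ‖y - xstar‖ ^ 2) * (N:ℝ) := by ring
end
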